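/- arXiv:1710.05123 — 2 statements merged into one kernel-verified Lean document; each statement's English description precedes it below -/
import Mathlib

section
/- Suppose M ∈ ΩDeep(R) and N ∈ DF(R). (1) If there exists a surjective R-module homomorphism M ↠ N, then M has a free direct summand. (2) If there exists a short exact sequence 0 → N → M → X → 0 with X ∈ Deep(R), then M has a free direct summand. -/
universe u

open IsLocalRing

noncomputable def rdepth (R : Type u) [CommRing R] [IsLocalRing R]
    (M : Type u) [AddCommGroup M] [Module R M] : ℕ :=
  sSup {n : ℕ | ∃ rs : List R, rs.length = n ∧ (∀ r ∈ rs, r ∈ maximalIdeal R) ∧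
    RingTheory.Sequence.IsRegular M rs}

def Deep (R : Type u) [CommRing R] [IsLocalRing R]
    (M : Type u) [AddCommGroup M] [Module R M] : Prop :=
  Module.Finite R M ∧ rdepth R R ≤ rdepth R M

def OmegaDeep (R : Type u) [CommRing R] [IsLocalRing R]
    (M : Type u) [AddCommGroup M] [Module R M] : Prop :=
  ∃ (n : ℕ) (f : M →ₗ[R] (Fin n → R)), Function.Injective f ∧
    Deep R ((Fin n → R) ⧸ LinearMap.range f)

def DF (R : Type u) [CommRing R] [IsLocalRing R]
    (M : Type u) [AddCommGroup M] [Module R M] : Prop :=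
  ∃ (n : ℕ) (f : R →ₗ[R] (Fin n → M)), Function.Injective f ∧
    Deep R ((Fin n → M) ⧸ LinearMap.range f)

def HasFreeSummand (R : Type u) [CommRing R] (M : Type u) [AddCommGroup M] [Module R M] : Prop :=
  ∃ (p : M →ₗ[R] R) (s : R →ₗ[R] M), p.comp s = LinearMap.id

noncomputable def mu (R : Type u) [CommRing R] (M : Type u) [AddCommGroup M] [Module R M] : ℕ :=
  sInf {n : ℕ | ∃ s : Fin n → M, Submodule.span R (Set.range s) = ⊤}

abbrev ExtVanishes (R : Type u) [CommRing R] (M N : Type u) [AddCommGroup M] [Module R M]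
    [AddCommGroup N] [Module R N] (i : ℕ) : Prop :=
  Subsingleton (((Ext R (ModuleCat.{u} R) i).obj
    (Opposite.op (ModuleCat.of R M))).obj (ModuleCat.of R N))


universe v
set_option linter.unusedSectionVars false
open Submodule

section SectA

variable {R : Type u} [CommRing R]

/-- nonzero socle element -/
def SocNZ (R : Type u) [CommRing R] [IsLocalRing R] (M : Type v) [AddCommGroup M]
    [Module R M] : Prop :=
  ∃ z : M, z ≠ 0 ∧ ∀ r ∈ maximalIdeal R, r • z = 0

variable {M : Type v} [AddCommGroup M] [Module R M]

lemma isAssociatedPrime_sub_or_quot [IsNoetherianRing R] {p : Ideal R} (hp : IsAssociatedPrime p M)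
    (N : Submodule R M) :
    IsAssociatedPrime p N ∨ IsAssociatedPrime p (M ⧸ N) := by
  obtain ⟨hprime, x, hx⟩ := isAssociatedPrime_iff.mp hp
  have hxmem : ∀ r : R, r ∈ p ↔ r • x = 0 := by
    intro r
    rw [hx, Submodule.mem_colon_singleton, Submodule.mem_bot]
  by_cases hcase : ∃ a : R, a • x ∈ N ∧ a • x ≠ 0
  · left
    obtain ⟨a, haN, ha0⟩ := hcase
    have hap : a ∉ p := fun h => ha0 ((hxmem a).mp h)
    refine isAssociatedPrime_iff.mpr ⟨hprime, ⟨a • x, haN⟩, ?_⟩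
    ext r
    rw [Submodule.mem_colon_singleton, Submodule.mem_bot]
    constructor
    · intro hr
      have : r • (a • x) = 0 := by
        rw [smul_comm, (hxmem r).mp hr, smul_zero]
      exact Subtype.ext this
    · intro hr
      have h1 : r • (a • x) = 0 := congrArg Subtype.val hr
      have h2 : (r * a) • x = 0 := by rwa [mul_smul]
      have := (hxmem (r * a)).mpr h2
      rcases hprime.mem_or_mem this with h | h
      · exact h
      · exact absurd h hap
  · right
    push_neg at hcase
    refine isAssociatedPrime_iff.mpr ⟨hprime, Submodule.Quotient.mk x, ?_⟩
    ext r
    rw [Submodule.mem_colon_singleton, Submodule.mem_bot, ← Submodule.Quotient.mk_smul,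
      Submodule.Quotient.mk_eq_zero]
    constructor
    · intro hr
      rw [(hxmem r).mp hr]; exact N.zero_mem
    · intro hr
      exact (hxmem r).mpr (hcase r hr)

end SectA


section SectA2
variable {R : Type u} [CommRing R] {M : Type v} [AddCommGroup M] [Module R M]

example [IsNoetherianRing R] [Module.Finite R M] : IsNoetherian R M := inferInstance

lemma assPrimes_finite [IsNoetherianRing R] [Module.Finite R M] :
    (associatedPrimes R M).Finite := by
  by_contra hbad
  -- the set of bad submodules
  set 𝒮 : Set (Submodule R M) :=
    {N : Submodule R M | ¬ (associatedPrimes R (M ⧸ N)).Finite} with h𝒮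
  have hbot : (⊥ : Submodule R M) ∈ 𝒮 := by
    have e := Submodule.quotEquivOfEqBot (⊥ : Submodule R M) rfl
    rw [h𝒮, Set.mem_setOf_eq, LinearEquiv.AssociatedPrimes.eq e]
    exact hbad
  obtain ⟨N, hN, hNmax⟩ :=
    set_has_maximal_iff_noetherian.mpr (inferInstance : IsNoetherian R M) 𝒮 ⟨⊥, hbot⟩
  have hnontriv : Nontrivial (M ⧸ N) := by
    rw [← not_subsingleton_iff_nontrivial]
    intro h
    exact hN (by rw [associatedPrimes.eq_empty_of_subsingleton]; exact Set.finite_empty)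
  obtain ⟨p, hp⟩ := associatedPrimes.nonempty R (M ⧸ N)
  obtain ⟨hprime, xb, hxb⟩ := isAssociatedPrime_iff.mp hp
  have hxbne : xb ≠ 0 := by
    rintro rfl
    apply hprime.ne_top
    rw [hxb]
    rw [Submodule.eq_top_iff']; intro r
    rw [Submodule.mem_colon_singleton, smul_zero]; exact Submodule.zero_mem _
  obtain ⟨x, rfl⟩ := Submodule.Quotient.mk_surjective N xb
  have hxN : x ∉ N := fun h => hxbne ((Submodule.Quotient.mk_eq_zero N).mpr h)
  set N' : Submodule R M := N ⊔ R ∙ x with hN'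
  have hxN' : x ∈ N' := by
    have h1 : (R ∙ x) ≤ N' := le_sup_right
    exact h1 (Submodule.mem_span_singleton_self x)
  have hlt : N < N' := lt_of_le_of_ne le_sup_left (fun h => hxN (h ▸ hxN'))
  have hN'fin : (associatedPrimes R (M ⧸ N')).Finite := by
    by_contra h
    exact hNmax N' h hlt
  -- S := span of xb inside M ⧸ N
  set S : Submodule R (M ⧸ N) := R ∙ (Submodule.Quotient.mk x : M ⧸ N) with hS
  -- S ≅ R ⧸ p
  have hkers : LinearMap.ker (LinearMap.toSpanSingleton R (M ⧸ N)
      (Submodule.Quotient.mk x)) = p := by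
    ext r
    rw [LinearMap.mem_ker, LinearMap.toSpanSingleton_apply, hxb,
      Submodule.mem_colon_singleton, Submodule.mem_bot]
  have hranges : LinearMap.range (LinearMap.toSpanSingleton R (M ⧸ N)
      (Submodule.Quotient.mk x)) = S := (LinearMap.span_singleton_eq_range R _ _).symm
  have eS : (R ⧸ p) ≃ₗ[R] S :=
    (Submodule.quotEquivOfEq _ _ hkers.symm) ≪≫ₗ
      ((LinearMap.toSpanSingleton R (M ⧸ N) (Submodule.Quotient.mk x)).quotKerEquivRange) ≪≫ₗ
      (LinearEquiv.ofEq _ _ hranges)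
  have hAssS : associatedPrimes R S ⊆ {p} := by
    rw [← LinearEquiv.AssociatedPrimes.eq eS]
    rw [associatedPrimes.eq_singleton_of_isPrimary hprime.isPrimary, hprime.radical]
  -- quotient
  have hmapS : S = N'.map N.mkQ := by
    rw [hN', Submodule.map_sup, Submodule.map_span]
    have h1 : N.map N.mkQ = ⊥ := by
      rw [eq_bot_iff]
      rintro y ⟨z, hz, rfl⟩
      exact (Submodule.Quotient.mk_eq_zero N).mpr hz
    rw [h1, bot_sup_eq, Set.image_singleton]
    rfl
  have eQ : ((M ⧸ N) ⧸ S) ≃ₗ[R] (M ⧸ N') := by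
    rw [hmapS]
    exact Submodule.quotientQuotientEquivQuotient N N' le_sup_left
  have hsubset : associatedPrimes R (M ⧸ N) ⊆
      associatedPrimes R S ∪ associatedPrimes R ((M ⧸ N) ⧸ S) := by
    intro q hq
    exact isAssociatedPrime_sub_or_quot hq S
  have hfin2 : (associatedPrimes R ((M ⧸ N) ⧸ S)).Finite := by
    rw [LinearEquiv.AssociatedPrimes.eq eQ]; exact hN'fin
  have hfin1 : (associatedPrimes R S).Finite := (Set.finite_singleton p).subset hAssS
  exact hN ((hfin1.union hfin2).subset hsubset)

end SectA2
section SectA3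
variable {R : Type u} [CommRing R] [IsLocalRing R] [IsNoetherianRing R]
variable {M : Type v} [AddCommGroup M] [Module R M]

lemma socNZ_of_no_regular [Module.Finite R M] [Nontrivial M]
    (h : ∀ r ∈ maximalIdeal R, ¬ IsSMulRegular M r) : SocNZ R M := by
  classical
  have hzd : (maximalIdeal R : Set R) ⊆
      ⋃ p ∈ associatedPrimes R M, (p : Set R) := by
    rw [biUnion_associatedPrimes_eq_zero_divisors]
    intro r hr
    have := h r hr
    rw [IsSMulRegular] at this
    rw [Function.Injective] at this
    push_neg at this
    obtain ⟨x, y, hxy, hne⟩ := this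
    exact ⟨x - y, sub_ne_zero.mpr hne, by rw [smul_sub, hxy, sub_self]⟩
  have hfin := assPrimes_finite (R := R) (M := M)
  set s : Finset (Ideal R) := hfin.toFinset with hs
  have hsub2 : (maximalIdeal R : Set R) ⊆ ⋃ p ∈ (s : Set (Ideal R)), (p : Set R) := by
    rwa [hs, Set.Finite.coe_toFinset]
  have hprime : ∀ p ∈ s, p ≠ (⊥ : Ideal R) → p ≠ (⊥ : Ideal R) → (id p).IsPrime := by
    intro p hp _ _
    rw [hs, Set.Finite.mem_toFinset] at hp
    exact hp.isPrime
  obtain ⟨p, hps, hle⟩ := (Ideal.subset_union_prime (f := (id : Ideal R → Ideal R)) ⊥ ⊥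
    hprime).mp hsub2
  rw [hs, Set.Finite.mem_toFinset] at hps
  obtain ⟨hpprime, x, hx⟩ := isAssociatedPrime_iff.mp hps
  have hple : p ≤ maximalIdeal R := IsLocalRing.le_maximalIdeal hpprime.ne_top
  have hpeq : p = maximalIdeal R := le_antisymm hple hle
  have hxne : x ≠ 0 := by
    rintro rfl
    apply hpprime.ne_top
    rw [hx, Submodule.eq_top_iff']; intro r
    rw [Submodule.mem_colon_singleton, smul_zero]; exact Submodule.zero_mem _
  refine ⟨x, hxne, fun r hr => ?_⟩
  have : r ∈ p := hpeq ▸ hr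
  rw [hx, Submodule.mem_colon_singleton, Submodule.mem_bot] at this
  exact this

lemma not_isSMulRegular_of_socNZ (h : SocNZ R M) {r : R} (hr : r ∈ maximalIdeal R) :
    ¬ IsSMulRegular M r := by
  obtain ⟨z, hz, hz0⟩ := h
  intro hreg
  exact hz (hreg (show r • z = r • 0 by rw [hz0 r hr, smul_zero]))

lemma socNZ_congr {M₂ : Type*} [AddCommGroup M₂] [Module R M₂] (e : M ≃ₗ[R] M₂)
    (h : SocNZ R M) : SocNZ R M₂ := by
  obtain ⟨z, hz, hz0⟩ := h
  refine ⟨e z, fun h0 => hz (by simpa using congrArg e.symm h0), fun r hr => ?_⟩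
  rw [← map_smul, hz0 r hr, map_zero]

lemma isSMulRegular_prod_iff {A B : Type*} [AddCommGroup A] [AddCommGroup B]
    [Module R A] [Module R B] (r : R) :
    IsSMulRegular (A × B) r ↔ IsSMulRegular A r ∧ IsSMulRegular B r := by
  constructor
  · intro h
    constructor
    · intro x y hxy
      have hxy' : r • x = r • y := hxy
      have hx : r • ((x, (0:B))) = r • ((y, (0:B))) := by
        rw [Prod.smul_mk, Prod.smul_mk, hxy']
      have := h hx
      exact (Prod.ext_iff.mp this).1
    · intro x y hxy
      have hxy' : r • x = r • y := hxy
      have hx : r • (((0:A), x)) = r • (((0:A), y)) := by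
        rw [Prod.smul_mk, Prod.smul_mk, hxy']
      have := h hx
      exact (Prod.ext_iff.mp this).2
  · rintro ⟨h1, h2⟩ ⟨x1, x2⟩ ⟨y1, y2⟩ hxy
    have hxy' : r • ((x1, x2)) = r • ((y1, y2)) := hxy
    rw [Prod.smul_mk, Prod.smul_mk, Prod.mk.injEq] at hxy'
    exact Prod.ext_iff.mpr ⟨h1 hxy'.1, h2 hxy'.2⟩

lemma exists_common_regular {A B : Type u} [AddCommGroup A] [AddCommGroup B]
    [Module R A] [Module R B] [Module.Finite R A] [Module.Finite R B]
    (hA : ∃ a ∈ maximalIdeal R, IsSMulRegular A a)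
    (hB : ∃ b ∈ maximalIdeal R, IsSMulRegular B b) :
    ∃ c ∈ maximalIdeal R, IsSMulRegular A c ∧ IsSMulRegular B c := by
  obtain ⟨a, ha, hareg⟩ := hA
  obtain ⟨b, hb, hbreg⟩ := hB
  by_cases hsA : Subsingleton A
  · exact ⟨b, hb, (fun x y _ => Subsingleton.elim x y), hbreg⟩
  by_cases hsB : Subsingleton B
  · exact ⟨a, ha, hareg, (fun x y _ => Subsingleton.elim x y)⟩
  rw [not_subsingleton_iff_nontrivial] at hsA hsB
  by_contra hcon
  push_neg at hcon
  have hno : ∀ r ∈ maximalIdeal R, ¬ IsSMulRegular (A × B) r := by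
    intro r hr hreg
    rw [isSMulRegular_prod_iff] at hreg
    exact hcon r hr hreg.1 hreg.2
  obtain ⟨⟨z1, z2⟩, hz, hz0⟩ := socNZ_of_no_regular hno
  by_cases h1 : z1 = 0
  · have h2 : z2 ≠ 0 := fun h => hz (by rw [h1, h]; rfl)
    apply h2
    apply hbreg
    have h3 := congrArg Prod.snd (hz0 b hb)
    show b • z2 = b • 0
    rw [smul_zero]
    exact h3
  · apply h1
    apply hareg
    have h3 := congrArg Prod.fst (hz0 a ha)
    show a • z1 = a • 0
    rw [smul_zero]
    exact h3

end SectA3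
open RingTheory.Sequence

section SectB
variable {R : Type u} [CommRing R] [IsLocalRing R] [IsNoetherianRing R]

/-- a regular sequence inside the maximal ideal -/
def GoodSeq (R : Type u) [CommRing R] [IsLocalRing R] (M : Type u) [AddCommGroup M]
    [Module R M] (rs : List R) : Prop :=
  (∀ r ∈ rs, r ∈ maximalIdeal R) ∧ RingTheory.Sequence.IsRegular M rs

lemma Ideal.ofList_eq_span (l : List R) : Ideal.ofList l = Ideal.span {x | x ∈ l} := by
  induction l with
  | nil =>
    rw [Ideal.ofList_nil]
    have : {x | x ∈ ([] : List R)} = (∅ : Set R) := by ext x; simp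
    rw [this, Ideal.span_empty]
  | cons r rs ih =>
    rw [Ideal.ofList_cons, ih, ← Ideal.span_union]
    congr 1
    ext x; simp

lemma Ideal.ofList_perm {l l' : List R} (h : l.Perm l') :
    Ideal.ofList l = Ideal.ofList l' := by
  rw [Ideal.ofList_eq_span, Ideal.ofList_eq_span]
  congr 1
  ext x
  exact h.mem_iff

variable {M : Type u} [AddCommGroup M] [Module R M]

lemma GoodSeq.ofList_le {rs : List R} (h : GoodSeq R M rs) :
    Ideal.ofList rs ≤ maximalIdeal R := by
  rw [Ideal.ofList_eq_span, Ideal.span_le]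
  exact h.1

lemma ofList_smul_ne_top [Module.Finite R M] [Nontrivial M] {rs : List R}
    (hm : ∀ r ∈ rs, r ∈ maximalIdeal R) :
    (⊤ : Submodule R M) ≠ Ideal.ofList rs • ⊤ := by
  have hle : Ideal.ofList rs ≤ maximalIdeal R := by
    rw [Ideal.ofList_eq_span, Ideal.span_le]; exact hm
  intro h
  have h2 : (⊤ : Submodule R M) ≤ (maximalIdeal R) • ⊤ :=
    le_trans (le_of_eq h) (Submodule.smul_mono_left hle)
  have h3 := Submodule.eq_bot_of_le_smul_of_le_jacobson_bot (maximalIdeal R) ⊤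
    (Module.Finite.fg_top) h2 (by rw [IsLocalRing.jacobson_eq_maximalIdeal ⊥ bot_ne_top])
  obtain ⟨x, hx⟩ := exists_ne (0 : M)
  have hmem : x ∈ (⊥ : Submodule R M) := h3 ▸ Submodule.mem_top
  exact hx ((Submodule.mem_bot R).mp hmem)

lemma goodSeq_of_weakly [Module.Finite R M] [Nontrivial M] {rs : List R}
    (hm : ∀ r ∈ rs, r ∈ maximalIdeal R) (hw : IsWeaklyRegular M rs) : GoodSeq R M rs :=
  ⟨hm, (IsLocalRing.isRegular_iff_isWeaklyRegular_of_subset_maximalIdeal hm).mpr hw⟩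

lemma GoodSeq.take [Module.Finite R M] {rs : List R} (h : GoodSeq R M rs) (n : ℕ) :
    GoodSeq R M (rs.take n) := by
  haveI : Nontrivial M := h.2.nontrivial
  have hm : ∀ r ∈ rs.take n, r ∈ maximalIdeal R := fun r hr => h.1 r (List.mem_of_mem_take hr)
  have hw : IsWeaklyRegular M (rs.take n) := by
    have := (isWeaklyRegular_append_iff M (rs.take n) (rs.drop n)).mp
      (by rw [List.take_append_drop]; exact h.2.toIsWeaklyRegular)
    exact this.1
  exact goodSeq_of_weakly hm hw

lemma GoodSeq.drop_quot [Module.Finite R M] {rs ts : List R} (h : GoodSeq R M (rs ++ ts)) :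
    GoodSeq R (M ⧸ (Ideal.ofList rs • ⊤ : Submodule R M)) ts := by
  haveI : Nontrivial M := h.2.nontrivial
  have hm : ∀ r ∈ ts, r ∈ maximalIdeal R := fun r hr => h.1 r (List.mem_append_right _ hr)
  have hw := ((isWeaklyRegular_append_iff M rs ts).mp h.2.toIsWeaklyRegular).2
  haveI : Nontrivial (M ⧸ (Ideal.ofList rs • ⊤ : Submodule R M)) := by
    refine Submodule.Quotient.nontrivial_iff.mpr <| LT.lt.ne <| (lt_of_le_of_ne le_top ?_)
    intro heq
    have h1 : Ideal.ofList rs • (⊤ : Submodule R M) ≤ Ideal.ofList (rs ++ ts) • ⊤ := by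
      apply Submodule.smul_mono_left
      rw [Ideal.ofList_append]
      exact le_sup_left
    have h2 : (⊤ : Submodule R M) ≤ Ideal.ofList (rs ++ ts) • ⊤ :=
      le_trans (le_of_eq heq.symm) h1
    exact h.2.top_ne_smul (le_antisymm h2 le_top)
  exact goodSeq_of_weakly hm hw

lemma GoodSeq.extend [Module.Finite R M] {rs : List R} (h : GoodSeq R M rs) {y : R}
    (hy : y ∈ maximalIdeal R)
    (hreg : IsSMulRegular (M ⧸ (Ideal.ofList rs • ⊤ : Submodule R M)) y) :
    GoodSeq R M (rs ++ [y]) := by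
  haveI : Nontrivial M := h.2.nontrivial
  have hm : ∀ r ∈ rs ++ [y], r ∈ maximalIdeal R := by
    intro r hr
    rcases List.mem_append.mp hr with h1 | h1
    · exact h.1 r h1
    · rw [List.mem_singleton.mp h1]; exact hy
  refine goodSeq_of_weakly hm ?_
  rw [isWeaklyRegular_append_iff]
  exact ⟨h.2.toIsWeaklyRegular,
    (RingTheory.Sequence.isWeaklyRegular_singleton_iff _ _).mpr hreg⟩

end SectB
section SectE
open Pointwise
variable {R : Type u} [CommRing R] [IsLocalRing R] [IsNoetherianRing R]
variable {M : Type u} [AddCommGroup M] [Module R M]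

lemma exists_maximal_goodSeq [Module.Finite R M] [Nontrivial M] :
    ∃ rs : List R, GoodSeq R M rs ∧
      SocNZ R (M ⧸ (Ideal.ofList rs • ⊤ : Submodule R M)) := by
  classical
  set 𝒯 : Set (Submodule R M) :=
    {N | ∃ rs : List R, GoodSeq R M rs ∧ N = Ideal.ofList rs • ⊤} with h𝒯
  have hne : 𝒯.Nonempty := by
    refine ⟨Ideal.ofList [] • ⊤, [], ⟨fun r hr => absurd hr (List.not_mem_nil), ?_⟩, rfl⟩
    exact RingTheory.Sequence.IsRegular.nil R M
  obtain ⟨N₀, ⟨rs₀, hrs₀, rfl⟩, hmax⟩ :=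
    set_has_maximal_iff_noetherian.mpr (inferInstance : IsNoetherian R M) 𝒯 hne
  refine ⟨rs₀, hrs₀, ?_⟩
  haveI : Nontrivial (M ⧸ (Ideal.ofList rs₀ • ⊤ : Submodule R M)) :=
    Submodule.Quotient.nontrivial_iff.mpr <| LT.lt.ne <| (lt_of_le_of_ne le_top hrs₀.2.top_ne_smul.symm)
  apply socNZ_of_no_regular
  intro y hy hreg
  have hext := hrs₀.extend hy hreg
  have hmem : Ideal.ofList (rs₀ ++ [y]) • (⊤ : Submodule R M) ∈ 𝒯 := ⟨_, hext, rfl⟩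
  apply hmax _ hmem
  constructor
  · apply Submodule.smul_mono_left
    rw [Ideal.ofList_append]
    exact le_sup_left
  · intro hle
    -- then y • ⊤ ≤ ofList rs₀ • ⊤, so y kills the quotient, contradicting regularity
    have hy_le : (Ideal.span {y}) • (⊤ : Submodule R M) ≤ Ideal.ofList rs₀ • ⊤ := by
      refine le_trans ?_ hle
      apply Submodule.smul_mono_left
      rw [Ideal.ofList_append, Ideal.ofList_singleton]
      exact le_sup_right
    obtain ⟨q, hq⟩ :=
      exists_ne (0 : M ⧸ (Ideal.ofList rs₀ • ⊤ : Submodule R M))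
    obtain ⟨x, rfl⟩ := Submodule.Quotient.mk_surjective _ q
    apply hq
    apply hreg
    show y • Submodule.Quotient.mk x = y • (0 : M ⧸ (Ideal.ofList rs₀ • ⊤ : Submodule R M))
    rw [smul_zero, ← Submodule.Quotient.mk_smul, Submodule.Quotient.mk_eq_zero]
    exact hy_le (Submodule.smul_mem_smul (Ideal.mem_span_singleton_self y) Submodule.mem_top)

lemma soc_exchange {W : Type u} [AddCommGroup W] [Module R W] {a b : R}
    (hb𝔪 : b ∈ maximalIdeal R)
    (ha : IsSMulRegular W a) (hb : IsSMulRegular W b)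
    (h : SocNZ R (QuotSMulTop a W)) : SocNZ R (QuotSMulTop b W) := by
  obtain ⟨zb, hzb, hzb0⟩ := h
  obtain ⟨z, rfl⟩ := Submodule.Quotient.mk_surjective _ zb
  have hzmem : z ∉ (a • ⊤ : Submodule R W) := fun h =>
    hzb ((Submodule.Quotient.mk_eq_zero _).mpr h)
  have hmz : ∀ r ∈ maximalIdeal R, r • z ∈ (a • ⊤ : Submodule R W) := by
    intro r hr
    rw [← Submodule.Quotient.mk_eq_zero (p := (a • ⊤ : Submodule R W)),
      Submodule.Quotient.mk_smul]
    exact hzb0 r hr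
  -- b • z = a • w
  obtain ⟨w, -, hw⟩ := Set.mem_smul_set.mp (hmz b hb𝔪)
  refine ⟨Submodule.Quotient.mk w, ?_, ?_⟩
  · rw [ne_eq, Submodule.Quotient.mk_eq_zero]
    intro hwmem
    obtain ⟨v, -, hv⟩ := Set.mem_smul_set.mp hwmem
    have h1 : b • (a • v) = b • z := by rw [smul_comm b a, hv, hw]
    have h2 : a • v = z := hb h1
    exact hzmem (h2 ▸ Submodule.smul_mem_pointwise_smul v a ⊤ Submodule.mem_top)
  · intro r hr
    rw [← Submodule.Quotient.mk_smul, Submodule.Quotient.mk_eq_zero]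
    obtain ⟨u, -, hu⟩ := Set.mem_smul_set.mp (hmz r hr)
    have h1 : a • (b • u) = a • (r • w) := by
      rw [smul_comm a b, hu, smul_comm b r, ← hw, smul_comm r a]
    have h2 : b • u = r • w := ha h1
    exact h2 ▸ Submodule.smul_mem_pointwise_smul u b ⊤ Submodule.mem_top

/-- quotient by `rs ++ [a]` is the quotient of the quotient by `rs` by `a` -/
noncomputable def quotAppendEquiv (W : Type u) [AddCommGroup W] [Module R W]
    (rs : List R) (a : R) :
    (W ⧸ (Ideal.ofList (rs ++ [a]) • ⊤ : Submodule R W)) ≃ₗ[R]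
      QuotSMulTop a (W ⧸ (Ideal.ofList rs • ⊤ : Submodule R W)) :=
  (Submodule.quotEquivOfEq _ _ (by
    rw [Ideal.ofList_perm (l := rs ++ [a]) (l' := a :: rs) (List.perm_append_singleton a rs)]
      )) ≪≫ₗ Submodule.quotOfListConsSMulTopEquivQuotSMulTopOuter W a rs

lemma soc_transfer : ∀ (n : ℕ) (W : Type u) [AddCommGroup W] [Module R W]
    [Module.Finite R W] (xs ys : List R), xs.length = n → ys.length = n →
    GoodSeq R W xs → GoodSeq R W ys →
    SocNZ R (W ⧸ (Ideal.ofList xs • ⊤ : Submodule R W)) →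
    SocNZ R (W ⧸ (Ideal.ofList ys • ⊤ : Submodule R W)) := by
  intro n
  induction n with
  | zero =>
    intro W _ _ _ xs ys hxl hyl _ _ hsoc
    rw [List.length_eq_zero_iff.mp hxl] at hsoc
    rw [List.length_eq_zero_iff.mp hyl]
    exact hsoc
  | succ n ih =>
    intro W _ _ _ xs ys hxl hyl hxg hyg hsoc
    rcases xs.eq_nil_or_concat' with rfl | ⟨xs₁, a, rfl⟩
    · simp at hxl
    rcases ys.eq_nil_or_concat' with rfl | ⟨ys₁, b, rfl⟩
    · simp at hyl
    rw [List.length_append, List.length_singleton] at hxl hyl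
    have hxl1 : xs₁.length = n := by omega
    have hyl1 : ys₁.length = n := by omega
    -- components
    have hxg1 : GoodSeq R W xs₁ := by
      have := hxg.take xs₁.length
      rwa [List.take_left] at this
    have hyg1 : GoodSeq R W ys₁ := by
      have := hyg.take ys₁.length
      rwa [List.take_left] at this
    have ha𝔪 : a ∈ maximalIdeal R := hxg.1 a (List.mem_append_right _ (List.mem_singleton_self a))
    have hb𝔪 : b ∈ maximalIdeal R := hyg.1 b (List.mem_append_right _ (List.mem_singleton_self b))
    set W₁ := W ⧸ (Ideal.ofList xs₁ • ⊤ : Submodule R W) with hW₁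
    set W₂ := W ⧸ (Ideal.ofList ys₁ • ⊤ : Submodule R W) with hW₂
    have hareg : IsSMulRegular W₁ a := by
      have := (hxg.drop_quot (rs := xs₁) (ts := [a]))
      exact (RingTheory.Sequence.isWeaklyRegular_singleton_iff _ _).mp this.2.toIsWeaklyRegular
    have hbreg : IsSMulRegular W₂ b := by
      have := (hyg.drop_quot (rs := ys₁) (ts := [b]))
      exact (RingTheory.Sequence.isWeaklyRegular_singleton_iff _ _).mp this.2.toIsWeaklyRegular
    -- common regular element c on W₁ and W₂
    obtain ⟨c, hc𝔪, hcreg1, hcreg2⟩ := exists_common_regular ⟨a, ha𝔪, hareg⟩ ⟨b, hb𝔪, hbreg⟩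
    -- given socle mod xs, transfer to socle mod (xs₁ ++ [c])
    have hsoc1 : SocNZ R (QuotSMulTop a W₁) := socNZ_congr (quotAppendEquiv W xs₁ a) hsoc
    have hsoc2 : SocNZ R (QuotSMulTop c W₁) := soc_exchange hc𝔪 hareg hcreg1 hsoc1
    -- permute to c :: xs₁
    have hgx : GoodSeq R W (xs₁ ++ [c]) := hxg1.extend hc𝔪 hcreg1
    have hgy : GoodSeq R W (ys₁ ++ [c]) := hyg1.extend hc𝔪 hcreg2
    have hgx' : GoodSeq R W (c :: xs₁) := by
      refine ⟨?_, IsLocalRing.isRegular_of_perm hgx.2 (List.perm_append_singleton c xs₁)⟩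
      intro r hr
      exact hgx.1 r ((List.perm_append_singleton c xs₁).mem_iff.mpr hr)
    have hgy' : GoodSeq R W (c :: ys₁) := by
      refine ⟨?_, IsLocalRing.isRegular_of_perm hgy.2 (List.perm_append_singleton c ys₁)⟩
      intro r hr
      exact hgy.1 r ((List.perm_append_singleton c ys₁).mem_iff.mpr hr)
    set W' := QuotSMulTop c W with hW'
    have hgx'' : GoodSeq R W' xs₁ := by
      refine ⟨fun r hr => hgx'.1 r (List.mem_cons_of_mem c hr), ?_⟩
      exact ((RingTheory.Sequence.isRegular_cons_iff W c xs₁).mp hgx'.2).2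
    have hgy'' : GoodSeq R W' ys₁ := by
      refine ⟨fun r hr => hgy'.1 r (List.mem_cons_of_mem c hr), ?_⟩
      exact ((RingTheory.Sequence.isRegular_cons_iff W c ys₁).mp hgy'.2).2
    -- move the socle statement to W'
    have hsoc2' : SocNZ R (W ⧸ (Ideal.ofList (xs₁ ++ [c]) • ⊤ : Submodule R W)) :=
      socNZ_congr (quotAppendEquiv W xs₁ c).symm hsoc2
    have hsoc2'' : SocNZ R (W ⧸ (Ideal.ofList (c :: xs₁) • ⊤ : Submodule R W)) :=
      socNZ_congr (Submodule.quotEquivOfEq _ _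
        (by rw [Ideal.ofList_perm (List.perm_append_singleton c xs₁)])) hsoc2'
    have hsoc3 : SocNZ R (W' ⧸ (Ideal.ofList xs₁ • ⊤ : Submodule R W')) :=
      socNZ_congr (Submodule.quotOfListConsSMulTopEquivQuotSMulTopInner W c xs₁) hsoc2''
    have hsoc4 := ih W' xs₁ ys₁ hxl1 hyl1 hgx'' hgy'' hsoc3
    have hsoc5 : SocNZ R (W ⧸ (Ideal.ofList (c :: ys₁) • ⊤ : Submodule R W)) :=
      socNZ_congr (Submodule.quotOfListConsSMulTopEquivQuotSMulTopInner W c ys₁).symm hsoc4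
    have hsoc6 : SocNZ R (W ⧸ (Ideal.ofList (ys₁ ++ [c]) • ⊤ : Submodule R W)) :=
      socNZ_congr (Submodule.quotEquivOfEq _ _
        (by rw [Ideal.ofList_perm (List.perm_append_singleton c ys₁)])) hsoc5
    have hsoc7 : SocNZ R (QuotSMulTop c W₂) := socNZ_congr (quotAppendEquiv W ys₁ c) hsoc6
    have hsoc8 : SocNZ R (QuotSMulTop b W₂) := soc_exchange hb𝔪 hcreg2 hbreg hsoc7
    exact socNZ_congr (quotAppendEquiv W ys₁ b).symm hsoc8

end SectE
section SectF
open Pointwise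
variable {R : Type u} [CommRing R] [IsLocalRing R] [IsNoetherianRing R]
variable {M : Type u} [AddCommGroup M] [Module R M]

lemma rdepth_def : rdepth R M = sSup {n : ℕ | ∃ rs : List R, rs.length = n ∧
    (∀ r ∈ rs, r ∈ maximalIdeal R) ∧ RingTheory.Sequence.IsRegular M rs} := rfl

lemma exists_next_regular [Module.Finite R M] [Nontrivial M] {rs : List R}
    (h : GoodSeq R M rs)
    (hno : ∀ ws : List R, GoodSeq R M ws → rs.length < ws.length → False) :
    SocNZ R (M ⧸ (Ideal.ofList rs • ⊤ : Submodule R M)) := by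
  haveI : Nontrivial (M ⧸ (Ideal.ofList rs • ⊤ : Submodule R M)) :=
    Submodule.Quotient.nontrivial_iff.mpr <| LT.lt.ne <| (lt_of_le_of_ne le_top h.2.top_ne_smul.symm)
  apply socNZ_of_no_regular
  intro y hy hreg
  exact hno _ (h.extend hy hreg) (by simp)

lemma rdepth_spec [Module.Finite R M] [Nontrivial M] :
    (∃ rs : List R, GoodSeq R M rs ∧ rs.length = rdepth R M) ∧
      (∀ xs : List R, GoodSeq R M xs → xs.length ≤ rdepth R M) := by
  obtain ⟨rs₀, h₀, hsoc₀⟩ := exists_maximal_goodSeq (R := R) (M := M)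
  have hub : ∀ xs : List R, GoodSeq R M xs → xs.length ≤ rs₀.length := by
    intro xs hxs
    by_contra hlt
    push_neg at hlt
    set xs' := xs.take rs₀.length with hxs'
    have hg' : GoodSeq R M xs' := hxs.take _
    have hlen' : xs'.length = rs₀.length := by
      rw [hxs', List.length_take]
      omega
    have hts : GoodSeq R (M ⧸ (Ideal.ofList xs' • ⊤ : Submodule R M))
        (xs.drop rs₀.length) := by
      have := GoodSeq.drop_quot (rs := xs') (ts := xs.drop rs₀.length)
        (by rw [hxs', List.take_append_drop]; exact hxs)
      exact this
    have hdropne : xs.drop rs₀.length ≠ [] := by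
      intro h
      have := congrArg List.length h
      rw [List.length_drop] at this
      simp at this
      omega
    obtain ⟨y, ts', hyts⟩ := List.exists_cons_of_ne_nil hdropne
    have hyreg : IsSMulRegular (M ⧸ (Ideal.ofList xs' • ⊤ : Submodule R M)) y := by
      have := hts.2.toIsWeaklyRegular
      rw [hyts, RingTheory.Sequence.isWeaklyRegular_cons_iff] at this
      exact this.1
    have hy𝔪 : y ∈ maximalIdeal R := by
      apply hts.1
      rw [hyts]; exact List.mem_cons_self
    have hsoc' := soc_transfer rs₀.length M rs₀ xs' rfl hlen' h₀ hg' hsoc₀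
    exact not_isSMulRegular_of_socNZ hsoc' hy𝔪 hyreg
  have hdep : rdepth R M = rs₀.length := by
    rw [rdepth_def]
    apply le_antisymm
    · apply csSup_le
      · exact ⟨0, [], rfl, fun r hr => absurd hr (List.not_mem_nil),
          RingTheory.Sequence.IsRegular.nil R M⟩
      · rintro n ⟨rs, rfl, hm, hreg⟩
        exact hub rs ⟨hm, hreg⟩
    · apply le_csSup
      · exact ⟨rs₀.length, fun n ⟨rs, hl, hm, hreg⟩ => hl ▸ hub rs ⟨hm, hreg⟩⟩
      · exact ⟨rs₀, rfl, h₀.1, h₀.2⟩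
  exact ⟨⟨rs₀, h₀, hdep.symm⟩, fun xs hxs => hdep ▸ hub xs hxs⟩

lemma length_le_rdepth [Module.Finite R M] {xs : List R} (h : GoodSeq R M xs) :
    xs.length ≤ rdepth R M := by
  haveI : Nontrivial M := h.2.nontrivial
  exact rdepth_spec.2 xs h

lemma le_rdepth_of_weakly [Module.Finite R M] [Nontrivial M] {rs : List R}
    (hm : ∀ r ∈ rs, r ∈ maximalIdeal R) (hw : RingTheory.Sequence.IsWeaklyRegular M rs) :
    rs.length ≤ rdepth R M :=
  length_le_rdepth (goodSeq_of_weakly hm hw)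

lemma exists_goodSeq_len_of_le [Module.Finite R M] [Nontrivial M] {n : ℕ}
    (h : n ≤ rdepth R M) : ∃ rs : List R, GoodSeq R M rs ∧ rs.length = n := by
  obtain ⟨rs, hrs, hlen⟩ := rdepth_spec (R := R) (M := M) |>.1
  exact ⟨rs.take n, hrs.take n, by rw [List.length_take]; omega⟩

lemma socNZ_of_goodSeq_maxlen [Module.Finite R M] {rs : List R} (h : GoodSeq R M rs)
    (hlen : rs.length = rdepth R M) :
    SocNZ R (M ⧸ (Ideal.ofList rs • ⊤ : Submodule R M)) := by
  haveI : Nontrivial M := h.2.nontrivial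
  apply exists_next_regular h
  intro ws hws hlt
  have := length_le_rdepth hws
  omega

lemma rdepth_quot_ge [Module.Finite R M] {rs : List R} (h : GoodSeq R M rs) :
    rdepth R M ≤ rs.length + rdepth R (M ⧸ (Ideal.ofList rs • ⊤ : Submodule R M)) := by
  haveI : Nontrivial M := h.2.nontrivial
  have hext : ∀ k : ℕ, ∀ rs : List R, GoodSeq R M rs → rs.length + k ≤ rdepth R M →
      ∃ ts : List R, ts.length = k ∧ GoodSeq R M (rs ++ ts) := by
    intro k
    induction k with
    | zero =>
      intro rs hrs _
      exact ⟨[], rfl, by rw [List.append_nil]; exact hrs⟩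
    | succ k ih =>
      intro rs hrs hle
      have hy : ∃ y ∈ maximalIdeal R,
          IsSMulRegular (M ⧸ (Ideal.ofList rs • ⊤ : Submodule R M)) y := by
        by_contra hno
        push_neg at hno
        have hsoc : SocNZ R (M ⧸ (Ideal.ofList rs • ⊤ : Submodule R M)) := by
          haveI : Nontrivial (M ⧸ (Ideal.ofList rs • ⊤ : Submodule R M)) :=
            Submodule.Quotient.nontrivial_iff.mpr <| LT.lt.ne <|
              (lt_of_le_of_ne le_top hrs.2.top_ne_smul.symm)
          exact socNZ_of_no_regular hno
        obtain ⟨ws, hws, hwlen⟩ := rdepth_spec (R := R) (M := M) |>.1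
        set ws' := ws.take rs.length with hws'
        have hglen : ws'.length = rs.length := by
          rw [hws', List.length_take]; omega
        have hsoc' := soc_transfer rs.length M rs ws' rfl hglen hrs (hws.take _) hsoc
        have hts : GoodSeq R (M ⧸ (Ideal.ofList ws' • ⊤ : Submodule R M))
            (ws.drop rs.length) := by
          have := GoodSeq.drop_quot (rs := ws') (ts := ws.drop rs.length)
            (by rw [hws', List.take_append_drop]; exact hws)
          exact this
        have hdropne : ws.drop rs.length ≠ [] := by
          intro h
          have := congrArg List.length h
          rw [List.length_drop] at this
          simp at this
          omega
        obtain ⟨y, ts', hyts⟩ := List.exists_cons_of_ne_nil hdropne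
        have hyreg : IsSMulRegular (M ⧸ (Ideal.ofList ws' • ⊤ : Submodule R M)) y := by
          have := hts.2.toIsWeaklyRegular
          rw [hyts, RingTheory.Sequence.isWeaklyRegular_cons_iff] at this
          exact this.1
        have hy𝔪 : y ∈ maximalIdeal R := by
          apply hts.1
          rw [hyts]; exact List.mem_cons_self
        exact not_isSMulRegular_of_socNZ hsoc' hy𝔪 hyreg
      obtain ⟨y, hy𝔪, hyreg⟩ := hy
      obtain ⟨ts, hts, hg⟩ := ih (rs ++ [y]) (hrs.extend hy𝔪 hyreg) (by simp; omega)
      refine ⟨[y] ++ ts, by simp [hts], ?_⟩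
      rwa [← List.append_assoc]
  rcases le_or_gt (rdepth R M) rs.length with hle | hlt
  · omega
  · obtain ⟨ts, htslen, hg⟩ := hext (rdepth R M - rs.length) rs h (by omega)
    have hq : GoodSeq R (M ⧸ (Ideal.ofList rs • ⊤ : Submodule R M)) ts := hg.drop_quot
    have := length_le_rdepth hq
    omega

lemma rdepth_congr {M₂ : Type u} [AddCommGroup M₂] [Module R M₂] (e : M ≃ₗ[R] M₂) :
    rdepth R M = rdepth R M₂ := by
  rw [rdepth_def, rdepth_def]
  congr 1
  ext n
  constructor
  · rintro ⟨rs, rfl, hm, hreg⟩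
    exact ⟨rs, rfl, hm, (e.isRegular_congr rs).mp hreg⟩
  · rintro ⟨rs, rfl, hm, hreg⟩
    exact ⟨rs, rfl, hm, (e.isRegular_congr rs).mpr hreg⟩

end SectF
section SectG
open Pointwise RingTheory.Sequence
variable {R : Type u} [CommRing R] [IsLocalRing R] [IsNoetherianRing R]

lemma isWeaklyRegular_of_subsingleton (A : Type v) [AddCommGroup A] [Module R A]
    [Subsingleton A] (rs : List R) : IsWeaklyRegular A rs := by
  refine .mk fun i h => ?_
  haveI : Subsingleton (A ⧸ (Ideal.ofList (rs.take i) • ⊤ : Submodule R A)) :=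
    (Submodule.Quotient.mk_surjective _).subsingleton
  exact fun x y _ => Subsingleton.elim x y

lemma ofList_singleton_smul {A : Type v} [AddCommGroup A] [Module R A] (c : R) :
    (Ideal.ofList [c] • ⊤ : Submodule R A) = c • ⊤ := by
  rw [Ideal.ofList_singleton, Submodule.ideal_span_singleton_smul]

lemma nontrivial_quotSMulTop {A : Type u} [AddCommGroup A] [Module R A]
    [Module.Finite R A] [Nontrivial A] {c : R} (hc : c ∈ maximalIdeal R) :
    Nontrivial (QuotSMulTop c A) := by
  have h := ofList_smul_ne_top (M := A) (rs := [c])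
    (by intro r hr; rw [List.mem_singleton.mp hr]; exact hc)
  rw [ofList_singleton_smul] at h
  exact Submodule.Quotient.nontrivial_iff.mpr <| LT.lt.ne <| (lt_of_le_of_ne le_top h.symm)

lemma rdepth_quotSMulTop_ge {A : Type u} [AddCommGroup A] [Module R A]
    [Module.Finite R A] {c : R} (hc : c ∈ maximalIdeal R) (hreg : IsSMulRegular A c)
    [Nontrivial A] :
    rdepth R A ≤ 1 + rdepth R (QuotSMulTop c A) := by
  have hg : GoodSeq R A [c] := goodSeq_of_weakly
    (by intro r hr; rw [List.mem_singleton.mp hr]; exact hc)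
    ((isWeaklyRegular_singleton_iff _ _).mpr hreg)
  have h := rdepth_quot_ge hg
  rwa [rdepth_congr (Submodule.quotEquivOfEq _ _ (ofList_singleton_smul c)),
    List.length_singleton] at h

lemma exists_weakly_pair : ∀ (n : ℕ) (A B : Type u) [AddCommGroup A] [Module R A]
    [Module.Finite R A] [AddCommGroup B] [Module R B] [Module.Finite R B],
    (Subsingleton A ∨ n ≤ rdepth R A) → (Subsingleton B ∨ n ≤ rdepth R B) →
    ∃ rs : List R, rs.length = n ∧ (∀ r ∈ rs, r ∈ maximalIdeal R) ∧
      IsWeaklyRegular A rs ∧ IsWeaklyRegular B rs := by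
  intro n
  induction n with
  | zero =>
    intro A B _ _ _ _ _ _ _ _
    exact ⟨[], rfl, fun r hr => absurd hr (List.not_mem_nil), .nil R A, .nil R B⟩
  | succ n ih =>
    intro A B _ _ _ _ _ _ hA hB
    have hrepl : ∀ (C : Type u) [AddCommGroup C] [Module R C] [Subsingleton C],
        ∃ rs : List R, rs.length = n + 1 ∧ (∀ r ∈ rs, r ∈ maximalIdeal R) ∧
          IsWeaklyRegular C rs := by
      intro C _ _ _
      refine ⟨List.replicate (n+1) 0, List.length_replicate, ?_, ?_⟩
      · intro r hr
        rw [List.eq_of_mem_replicate hr]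
        exact zero_mem _
      · exact isWeaklyRegular_of_subsingleton C _
    by_cases hsA : Subsingleton A
    · by_cases hsB : Subsingleton B
      · obtain ⟨rs, h1, h2, h3⟩ := hrepl A
        exact ⟨rs, h1, h2, h3, isWeaklyRegular_of_subsingleton B rs⟩
      · haveI : Nontrivial B := not_subsingleton_iff_nontrivial.mp hsB
        obtain ⟨rs, hrs, hlen⟩ := exists_goodSeq_len_of_le (hB.resolve_left hsB)
        exact ⟨rs, hlen, hrs.1, isWeaklyRegular_of_subsingleton A rs,
          hrs.2.toIsWeaklyRegular⟩
    · by_cases hsB : Subsingleton B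
      · haveI : Nontrivial A := not_subsingleton_iff_nontrivial.mp hsA
        obtain ⟨rs, hrs, hlen⟩ := exists_goodSeq_len_of_le (hA.resolve_left hsA)
        exact ⟨rs, hlen, hrs.1, hrs.2.toIsWeaklyRegular,
          isWeaklyRegular_of_subsingleton B rs⟩
      haveI : Nontrivial A := not_subsingleton_iff_nontrivial.mp hsA
      haveI : Nontrivial B := not_subsingleton_iff_nontrivial.mp hsB
      have hnA : n + 1 ≤ rdepth R A := hA.resolve_left hsA
      have hnB : n + 1 ≤ rdepth R B := hB.resolve_left hsB
      -- a regular element on each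
      obtain ⟨rsa, hrsa, hlena⟩ := exists_goodSeq_len_of_le (le_trans (by omega) hnA)
        (n := 1)
      obtain ⟨a, rfl⟩ := List.length_eq_one_iff.mp hlena
      have hareg : IsSMulRegular A a :=
        (isWeaklyRegular_singleton_iff _ _).mp hrsa.2.toIsWeaklyRegular
      obtain ⟨rsb, hrsb, hlenb⟩ := exists_goodSeq_len_of_le (le_trans (by omega) hnB)
        (n := 1)
      obtain ⟨b, rfl⟩ := List.length_eq_one_iff.mp hlenb
      have hbreg : IsSMulRegular B b :=
        (isWeaklyRegular_singleton_iff _ _).mp hrsb.2.toIsWeaklyRegular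
      obtain ⟨c, hc𝔪, hcA, hcB⟩ := exists_common_regular
        ⟨a, hrsa.1 a (List.mem_singleton_self a), hareg⟩
        ⟨b, hrsb.1 b (List.mem_singleton_self b), hbreg⟩
      have hA' : n ≤ rdepth R (QuotSMulTop c A) := by
        have := rdepth_quotSMulTop_ge hc𝔪 hcA (A := A)
        omega
      have hB' : n ≤ rdepth R (QuotSMulTop c B) := by
        have := rdepth_quotSMulTop_ge hc𝔪 hcB (A := B)
        omega
      obtain ⟨rs', hlen', hmem', hwA', hwB'⟩ := ih (QuotSMulTop c A) (QuotSMulTop c B)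
        (Or.inr hA') (Or.inr hB')
      refine ⟨c :: rs', by simp [hlen'], ?_, ?_, ?_⟩
      · intro r hr
        rcases List.mem_cons.mp hr with rfl | hr
        · exact hc𝔪
        · exact hmem' r hr
      · exact (isWeaklyRegular_cons_iff A c rs').mpr ⟨hcA, hwA'⟩
      · exact (isWeaklyRegular_cons_iff B c rs').mpr ⟨hcB, hwB'⟩

end SectG
section SectH
open Pointwise RingTheory.Sequence
variable {R : Type u} [CommRing R] [IsLocalRing R] [IsNoetherianRing R]

lemma isSMulRegular_submodule {M : Type u} [AddCommGroup M] [Module R M]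
    {N : Submodule R M} {r : R} (h : IsSMulRegular M r) : IsSMulRegular (↥N) r :=
  fun x y hxy => Subtype.ext (h (congrArg Subtype.val hxy))

lemma map_mkQ_self_eq_bot {M : Type u} [AddCommGroup M] [Module R M]
    (S : Submodule R M) : S.map S.mkQ = ⊥ := by
  rw [eq_bot_iff]
  rintro y ⟨z, hz, rfl⟩
  exact (Submodule.Quotient.mk_eq_zero S).mpr hz

lemma quot_step {M : Type u} [AddCommGroup M] [Module R M] (N : Submodule R M) {c : R}
    (hreg : IsSMulRegular (M ⧸ N) c) :
    Nonempty ((QuotSMulTop c ↥N ≃ₗ[R] ↥(N.map (c • (⊤ : Submodule R M)).mkQ)) ×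
      (QuotSMulTop c (M ⧸ N) ≃ₗ[R]
        ((QuotSMulTop c M) ⧸ N.map (c • (⊤ : Submodule R M)).mkQ))) := by
  set S : Submodule R M := c • ⊤ with hS
  set φ : ↥N →ₗ[R] M ⧸ S := S.mkQ.comp N.subtype with hφ
  have hker : LinearMap.ker φ = (c • ⊤ : Submodule R ↥N) := by
    ext x
    constructor
    · intro hx
      have hx' : (x : M) ∈ S := by
        rw [hφ] at hx
        simpa [Submodule.Quotient.mk_eq_zero] using hx
      obtain ⟨m, -, hm⟩ := Set.mem_smul_set.mp hx'
      have hmN : m ∈ N := by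
        have h0 : c • (Submodule.Quotient.mk m : M ⧸ N) =
            c • (0 : M ⧸ N) := by
          rw [smul_zero, ← Submodule.Quotient.mk_smul, Submodule.Quotient.mk_eq_zero, hm]
          exact x.2
        have := hreg h0
        rwa [Submodule.Quotient.mk_eq_zero] at this
      refine Set.mem_smul_set.mpr ⟨⟨m, hmN⟩, Submodule.mem_top, ?_⟩
      exact Subtype.ext hm
    · intro hx
      obtain ⟨y, -, hy⟩ := Set.mem_smul_set.mp hx
      rw [LinearMap.mem_ker, hφ]
      have : (x : M) = c • (y : M) := by rw [← hy]; rfl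
      simp only [LinearMap.coe_comp, Function.comp_apply, Submodule.coe_subtype,
        Submodule.mkQ_apply, Submodule.Quotient.mk_eq_zero]
      rw [this]
      exact Submodule.smul_mem_pointwise_smul _ c ⊤ Submodule.mem_top
  have hrange : LinearMap.range φ = N.map S.mkQ := by
    rw [hφ, LinearMap.range_comp, Submodule.range_subtype]
  have e₁ : QuotSMulTop c ↥N ≃ₗ[R] ↥(N.map S.mkQ) :=
    (Submodule.quotEquivOfEq _ _ hker.symm) ≪≫ₗ φ.quotKerEquivRange ≪≫ₗ
      (LinearEquiv.ofEq _ _ hrange)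
  have hmap1 : (S ⊔ N).map S.mkQ = N.map S.mkQ := by
    rw [Submodule.map_sup, map_mkQ_self_eq_bot, bot_sup_eq]
  have hmap2 : (N ⊔ S).map N.mkQ = (c • ⊤ : Submodule R (M ⧸ N)) := by
    rw [Submodule.map_sup, map_mkQ_self_eq_bot, bot_sup_eq, hS,
      Submodule.map_pointwise_smul, Submodule.map_top, Submodule.range_mkQ]
  have E1 : ((M ⧸ S) ⧸ N.map S.mkQ) ≃ₗ[R] M ⧸ (S ⊔ N) :=
    (Submodule.quotEquivOfEq _ _ hmap1.symm) ≪≫ₗ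
      Submodule.quotientQuotientEquivQuotient S (S ⊔ N) le_sup_left
  have E2 : QuotSMulTop c (M ⧸ N) ≃ₗ[R] M ⧸ (N ⊔ S) :=
    (Submodule.quotEquivOfEq _ _ hmap2.symm) ≪≫ₗ
      Submodule.quotientQuotientEquivQuotient N (N ⊔ S) le_sup_left
  have e₂ : QuotSMulTop c (M ⧸ N) ≃ₗ[R]
      ((QuotSMulTop c M) ⧸ N.map S.mkQ) :=
    E2 ≪≫ₗ (Submodule.quotEquivOfEq _ _ (sup_comm N S)) ≪≫ₗ E1.symm
  exact ⟨⟨e₁, e₂⟩⟩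

lemma isWeaklyRegular_of_sub_quot : ∀ (rs : List R) (M : Type u) [AddCommGroup M]
    [Module R M] (N : Submodule R M), IsWeaklyRegular (↥N) rs →
    IsWeaklyRegular (M ⧸ N) rs → IsWeaklyRegular M rs := by
  intro rs
  induction rs with
  | nil => intro M _ _ N _ _; exact .nil R M
  | cons r rs' ih =>
    intro M _ _ N hN hQ
    rw [isWeaklyRegular_cons_iff] at hN hQ ⊢
    obtain ⟨hNreg, hN'⟩ := hN
    obtain ⟨hQreg, hQ'⟩ := hQ
    have hreg : IsSMulRegular M r := by
      intro x y hxy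
      have hxy' : r • x = r • y := hxy
      have hq : r • (Submodule.Quotient.mk x : M ⧸ N) = r • (Submodule.Quotient.mk y) := by
        rw [← Submodule.Quotient.mk_smul, ← Submodule.Quotient.mk_smul, hxy']
      have hmk := hQreg hq
      have hmem : x - y ∈ N := by
        rwa [← Submodule.Quotient.mk_eq_zero, Submodule.Quotient.mk_sub, sub_eq_zero]
      have hz : r • (⟨x - y, hmem⟩ : ↥N) = r • (0 : ↥N) := by
        apply Subtype.ext
        show r • (x - y) = r • (0 : M)
        rw [smul_sub, hxy', sub_self, smul_zero]
      have := hNreg hz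
      have hxy0 : x - y = 0 := congrArg Subtype.val this
      exact sub_eq_zero.mp hxy0
    refine ⟨hreg, ?_⟩
    obtain ⟨e₁, e₂⟩ := (quot_step N hQreg).some
    exact ih (QuotSMulTop r M) (N.map (r • (⊤ : Submodule R M)).mkQ)
      ((e₁.isWeaklyRegular_congr rs').mp hN')
      ((e₂.isWeaklyRegular_congr rs').mp hQ')

lemma rdepth_middle {M : Type u} [AddCommGroup M] [Module R M] [Module.Finite R M]
    [Nontrivial M] (N : Submodule R M) {n : ℕ}
    (hN : Subsingleton (↥N) ∨ n ≤ rdepth R (↥N))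
    (hQ : Subsingleton (M ⧸ N) ∨ n ≤ rdepth R (M ⧸ N)) : n ≤ rdepth R M := by
  haveI : Module.Finite R (↥N) := Module.Finite.iff_fg.mpr (IsNoetherian.noetherian N)
  obtain ⟨rs, hlen, hmem, hwN, hwQ⟩ := exists_weakly_pair n (↥N) (M ⧸ N) hN hQ
  have hw : IsWeaklyRegular M rs := isWeaklyRegular_of_sub_quot rs M N hwN hwQ
  rw [← hlen]
  exact le_rdepth_of_weakly hmem hw

end SectH
section SectI
open Pointwise RingTheory.Sequence
variable {R : Type u} [CommRing R] [IsLocalRing R] [IsNoetherianRing R]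

lemma rdepth_sub : ∀ (n : ℕ) (M : Type u) [AddCommGroup M] [Module R M]
    [Module.Finite R M] (N : Submodule R M), Nontrivial (↥N) → n ≤ rdepth R M →
    (Subsingleton (M ⧸ N) ∨ n - 1 ≤ rdepth R (M ⧸ N)) → n ≤ rdepth R (↥N) := by
  intro n
  induction n with
  | zero => intro M _ _ _ N _ _ _; exact Nat.zero_le _
  | succ n ih =>
    intro M _ _ _ N hNnt hM hQ
    haveI := hNnt
    haveI : Module.Finite R (↥N) := Module.Finite.iff_fg.mpr (IsNoetherian.noetherian N)
    by_cases hQs : Subsingleton (M ⧸ N)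
    · have hNtop : N = ⊤ := Submodule.Quotient.subsingleton_iff.mp hQs
      subst hNtop
      rw [rdepth_congr (Submodule.topEquiv (R := R) (M := M))]
      exact hM
    · haveI hQnt : Nontrivial (M ⧸ N) := not_subsingleton_iff_nontrivial.mp hQs
      have hQ' : n ≤ rdepth R (M ⧸ N) := by
        have := hQ.resolve_left hQs
        omega
      haveI : Nontrivial M := by
        obtain ⟨x, hx⟩ := exists_ne (0 : ↥N)
        exact ⟨⟨(x : M), 0, fun h => hx (Subtype.ext h)⟩⟩
      -- a regular element on M
      obtain ⟨rs₀, hrs₀, hlen₀⟩ := exists_goodSeq_len_of_le (n := 1)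
        (le_trans (by omega) hM)
      obtain ⟨c₀, rfl⟩ := List.length_eq_one_iff.mp hlen₀
      have hc₀reg : IsSMulRegular M c₀ :=
        (isWeaklyRegular_singleton_iff _ _).mp hrs₀.2.toIsWeaklyRegular
      rcases Nat.eq_zero_or_pos n with rfl | hpos
      · -- n + 1 = 1
        have hgN : GoodSeq R (↥N) [c₀] := goodSeq_of_weakly hrs₀.1
          ((isWeaklyRegular_singleton_iff _ _).mpr (isSMulRegular_submodule hc₀reg))
        have := length_le_rdepth hgN
        simpa using this
      · -- n ≥ 1 : get a common regular element on M and M ⧸ N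
        obtain ⟨rs₁, hrs₁, hlen₁⟩ := exists_goodSeq_len_of_le (n := 1)
          (le_trans hpos hQ')
        obtain ⟨c₁, rfl⟩ := List.length_eq_one_iff.mp hlen₁
        have hc₁reg : IsSMulRegular (M ⧸ N) c₁ :=
          (isWeaklyRegular_singleton_iff _ _).mp hrs₁.2.toIsWeaklyRegular
        obtain ⟨c, hc𝔪, hcM, hcQ⟩ := exists_common_regular
          ⟨c₀, hrs₀.1 c₀ (List.mem_singleton_self c₀), hc₀reg⟩
          ⟨c₁, hrs₁.1 c₁ (List.mem_singleton_self c₁), hc₁reg⟩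
        obtain ⟨e₁, e₂⟩ := (quot_step N hcQ).some
        set N' := N.map (c • (⊤ : Submodule R M)).mkQ with hN'
        haveI : Nontrivial (QuotSMulTop c ↥N) := nontrivial_quotSMulTop hc𝔪
        haveI : Nontrivial (↥N') := by
          obtain ⟨x, y, hxy⟩ := (inferInstance : Nontrivial (QuotSMulTop c ↥N))
          exact ⟨⟨e₁ x, e₁ y, fun h => hxy (e₁.injective h)⟩⟩
        have hM' : n ≤ rdepth R (QuotSMulTop c M) := by
          have := rdepth_quotSMulTop_ge hc𝔪 hcM (A := M)
          omega
        have hQ'' : n - 1 ≤ rdepth R ((QuotSMulTop c M) ⧸ N') := by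
          have h1 := rdepth_quotSMulTop_ge hc𝔪 hcQ (A := M ⧸ N)
          have h2 := rdepth_congr e₂
          omega
        have hres := ih (QuotSMulTop c M) N' inferInstance hM' (Or.inr hQ'')
        have hres' : n ≤ rdepth R (QuotSMulTop c ↥N) := by
          rwa [rdepth_congr e₁]
        obtain ⟨ts, hts, htslen⟩ := exists_goodSeq_len_of_le hres'
        have hgood : GoodSeq R (↥N) (c :: ts) := by
          refine ⟨?_, ?_⟩
          · intro r hr
            rcases List.mem_cons.mp hr with rfl | hr
            · exact hc𝔪
            · exact hts.1 r hr
          · exact (isRegular_cons_iff (↥N) c ts).mpr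
              ⟨isSMulRegular_submodule hcM, hts.2⟩
        have := length_le_rdepth hgood
        rw [List.length_cons, htslen] at this
        omega

end SectI
section SectJ
open Pointwise RingTheory.Sequence
variable {R : Type u} [CommRing R] [IsLocalRing R] [IsNoetherianRing R]

lemma inj_mod : ∀ (rs : List R) (A B : Type u) [AddCommGroup A] [Module R A]
    [AddCommGroup B] [Module R B] (j : A →ₗ[R] B), Function.Injective j →
    IsWeaklyRegular (B ⧸ LinearMap.range j) rs →
    ∀ a : A, j a ∈ (Ideal.ofList rs • ⊤ : Submodule R B) →
      a ∈ (Ideal.ofList rs • ⊤ : Submodule R A) := by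
  intro rs
  induction rs with
  | nil =>
    intro A B _ _ _ _ j hj _ a ha
    rw [Ideal.ofList_nil, bot_smul, Submodule.mem_bot] at ha ⊢
    exact hj (by rw [ha, map_zero])
  | cons r rs' ih =>
    intro A B _ _ _ _ j hj hw a ha
    rw [isWeaklyRegular_cons_iff] at hw
    obtain ⟨hrreg, hw'⟩ := hw
    rw [Ideal.ofList_cons_smul] at ha ⊢
    obtain ⟨x, hx, y, hy, hxy⟩ := Submodule.mem_sup.mp ha
    -- the induced map on quotients by r
    have hle : (r • ⊤ : Submodule R A) ≤ Submodule.comap j (r • ⊤ : Submodule R B) := by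
      intro z hz
      obtain ⟨v, -, hv⟩ := Set.mem_smul_set.mp hz
      rw [Submodule.mem_comap, ← hv, map_smul]
      exact Submodule.smul_mem_pointwise_smul _ r ⊤ Submodule.mem_top
    set jb : QuotSMulTop r A →ₗ[R] QuotSMulTop r B :=
      Submodule.mapQ (r • ⊤ : Submodule R A) (r • ⊤ : Submodule R B) j hle with hjb
    have hjbmk : ∀ z : A, jb (Submodule.Quotient.mk z) = Submodule.Quotient.mk (j z) :=
      fun z => rfl
    have hjbinj : Function.Injective jb := by
      rw [← LinearMap.ker_eq_bot, eq_bot_iff]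
      intro zb hzb
      obtain ⟨z, rfl⟩ := Submodule.Quotient.mk_surjective _ zb
      rw [LinearMap.mem_ker, hjbmk, Submodule.Quotient.mk_eq_zero] at hzb
      obtain ⟨w, -, hw0⟩ := Set.mem_smul_set.mp hzb
      have hwq : r • (Submodule.Quotient.mk w : B ⧸ LinearMap.range j) =
          r • (0 : B ⧸ LinearMap.range j) := by
        rw [smul_zero, ← Submodule.Quotient.mk_smul, Submodule.Quotient.mk_eq_zero, hw0]
        exact LinearMap.mem_range_self j z
      have := hrreg hwq
      rw [Submodule.Quotient.mk_eq_zero] at this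
      obtain ⟨z', hz'⟩ := this
      have hzz : j z = j (r • z') := by rw [map_smul, hz', hw0]
      rw [Submodule.mem_bot, Submodule.Quotient.mk_eq_zero, hj hzz]
      exact Submodule.smul_mem_pointwise_smul _ r ⊤ Submodule.mem_top
    -- identify the cokernel of jb
    obtain ⟨-, e₂⟩ := (quot_step (LinearMap.range j) hrreg).some
    have hrange : LinearMap.range jb =
        (LinearMap.range j).map (r • (⊤ : Submodule R B)).mkQ := by
      apply le_antisymm
      · rintro zb ⟨wb, rfl⟩
        obtain ⟨w, rfl⟩ := Submodule.Quotient.mk_surjective _ wb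
        exact ⟨j w, LinearMap.mem_range_self j w, (hjbmk w).symm⟩
      · rintro zb ⟨w, ⟨v, rfl⟩, rfl⟩
        exact ⟨Submodule.Quotient.mk v, (hjbmk v)⟩
    have ecoker : (QuotSMulTop r B ⧸ LinearMap.range jb) ≃ₗ[R]
        QuotSMulTop r (B ⧸ LinearMap.range j) :=
      (Submodule.quotEquivOfEq _ _ hrange) ≪≫ₗ e₂.symm
    have hw'' : IsWeaklyRegular (QuotSMulTop r B ⧸ LinearMap.range jb) rs' :=
      (ecoker.isWeaklyRegular_congr rs').mpr hw'
    -- apply the induction hypothesis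
    have hmem : jb (Submodule.Quotient.mk a) ∈
        (Ideal.ofList rs' • ⊤ : Submodule R (QuotSMulTop r B)) := by
      rw [hjbmk, ← hxy]
      have h1 : (Submodule.Quotient.mk (x + y) : QuotSMulTop r B) =
          Submodule.Quotient.mk y := by
        rw [Submodule.Quotient.mk_add]
        have : (Submodule.Quotient.mk x : QuotSMulTop r B) = 0 :=
          (Submodule.Quotient.mk_eq_zero _).mpr hx
        rw [this, zero_add]
      rw [h1]
      have h2 : Ideal.ofList rs' • (⊤ : Submodule R (QuotSMulTop r B)) =
          (Ideal.ofList rs' • (⊤ : Submodule R B)).map (r • (⊤ : Submodule R B)).mkQ := by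
        rw [Submodule.map_smul'', Submodule.map_top, Submodule.range_mkQ]
      rw [h2]
      exact ⟨y, hy, rfl⟩
    have hres := ih (QuotSMulTop r A) (QuotSMulTop r B) jb hjbinj hw''
      (Submodule.Quotient.mk a) hmem
    have h3 : Ideal.ofList rs' • (⊤ : Submodule R (QuotSMulTop r A)) =
        (Ideal.ofList rs' • (⊤ : Submodule R A)).map (r • (⊤ : Submodule R A)).mkQ := by
      rw [Submodule.map_smul'', Submodule.map_top, Submodule.range_mkQ]
    rw [h3] at hres
    obtain ⟨a', ha', haa⟩ := hres
    have haa' : (Submodule.Quotient.mk a' : QuotSMulTop r A) = Submodule.Quotient.mk a := haa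
    have : a - a' ∈ (r • ⊤ : Submodule R A) := by
      rw [← Submodule.Quotient.mk_eq_zero, Submodule.Quotient.mk_sub, haa', sub_self]
    refine Submodule.mem_sup.mpr ⟨a - a', this, a', ha', by abel⟩

lemma smul_top_pi {k : ℕ} (c : R) (A : Type u) [AddCommGroup A] [Module R A] :
    (c • ⊤ : Submodule R (Fin k → A)) =
      Submodule.pi Set.univ (fun _ => (c • ⊤ : Submodule R A)) := by
  ext w
  rw [Submodule.mem_pi]
  constructor
  · intro hw i _
    obtain ⟨v, -, hv⟩ := Set.mem_smul_set.mp hw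
    rw [← hv]
    exact Submodule.smul_mem_pointwise_smul _ c ⊤ Submodule.mem_top
  · intro hw
    have hchoice : ∀ i : Fin k, ∃ v : A, c • v = w i := by
      intro i
      obtain ⟨v, -, hv⟩ := Set.mem_smul_set.mp (hw i trivial)
      exact ⟨v, hv⟩
    choose v hv using hchoice
    refine Set.mem_smul_set.mpr ⟨v, Submodule.mem_top, funext fun i => hv i⟩

lemma isWeaklyRegular_pi (k : ℕ) : ∀ (rs : List R) (A : Type u) [AddCommGroup A]
    [Module R A], IsWeaklyRegular A rs → IsWeaklyRegular (Fin k → A) rs := by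
  intro rs
  induction rs with
  | nil => intro A _ _ _; exact .nil R _
  | cons r rs' ih =>
    intro A _ _ h
    rw [isWeaklyRegular_cons_iff] at h ⊢
    obtain ⟨hreg, h'⟩ := h
    refine ⟨?_, ?_⟩
    · intro x y hxy
      funext i
      exact hreg (congrFun hxy i)
    · have e : QuotSMulTop r (Fin k → A) ≃ₗ[R] (Fin k → QuotSMulTop r A) :=
        (Submodule.quotEquivOfEq _ _ (smul_top_pi r A)) ≪≫ₗ
          (Submodule.quotientPi _)
      exact (e.isWeaklyRegular_congr rs').mpr (ih (QuotSMulTop r A) h')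

lemma rdepth_pi_disj (k : ℕ) {A : Type u} [AddCommGroup A] [Module R A]
    [Module.Finite R A] {n : ℕ} (h : Subsingleton A ∨ n ≤ rdepth R A) :
    Subsingleton (Fin k → A) ∨ n ≤ rdepth R (Fin k → A) := by
  rcases h with h | h
  · left; infer_instance
  · by_cases hs : Subsingleton (Fin k → A)
    · exact Or.inl hs
    right
    haveI : Nontrivial (Fin k → A) := not_subsingleton_iff_nontrivial.mp hs
    haveI : Nontrivial A := by
      by_contra hA
      haveI : Subsingleton A := not_nontrivial_iff_subsingleton.mp hA
      exact hs inferInstance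
    obtain ⟨rs, hrs, hlen⟩ := exists_goodSeq_len_of_le h
    rw [← hlen]
    exact le_rdepth_of_weakly hrs.1 (isWeaklyRegular_pi k rs A hrs.2.toIsWeaklyRegular)

end SectJ
section SectK
open Pointwise RingTheory.Sequence
variable {R : Type u} [CommRing R] [IsLocalRing R] [IsNoetherianRing R]

lemma mem_ideal_smul_top_pi {k : ℕ} {I : Ideal R} {B : Type u} [AddCommGroup B]
    [Module R B] {w : Fin k → B} (h : ∀ i, w i ∈ I • (⊤ : Submodule R B)) :
    w ∈ I • (⊤ : Submodule R (Fin k → B)) := by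
  have hw : w = ∑ i, Pi.single i (w i) := (Finset.univ_sum_single w).symm
  rw [hw]
  apply Submodule.sum_mem
  intro i _
  have h1 : Pi.single i (w i) = (LinearMap.single R (fun _ : Fin k => B) i) (w i) := rfl
  rw [h1]
  have h2 : (LinearMap.single R (fun _ : Fin k => B) i) (w i) ∈
      (I • ⊤ : Submodule R B).map (LinearMap.single R (fun _ : Fin k => B) i) :=
    ⟨w i, h i, rfl⟩
  have h3 : (I • (⊤ : Submodule R B)).map (LinearMap.single R (fun _ : Fin k => B) i) ≤
      I • (⊤ : Submodule R (Fin k → B)) := by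
    rw [Submodule.map_smul'']
    exact smul_mono_right I le_top
  exact h3 h2

lemma mem_ideal_smul_top_self {I : Ideal R} {x : R} (h : x ∈ I) :
    x ∈ I • (⊤ : Submodule R R) := by
  rw [smul_eq_mul, Ideal.mul_top]
  exact h

lemma main_endgame {M : Type u} [AddCommGroup M] [Module R M] [Module.Finite R M]
    {m n : ℕ} (ι : M →ₗ[R] (Fin m → R)) (hι : Function.Injective ι)
    (hY : rdepth R R ≤ rdepth R ((Fin m → R) ⧸ LinearMap.range ι))
    (h : R →ₗ[R] (Fin n → M)) (hh : Function.Injective h)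
    (hC : Subsingleton ((Fin n → M) ⧸ LinearMap.range h) ∨
      rdepth R R ≤ rdepth R ((Fin n → M) ⧸ LinearMap.range h)) :
    HasFreeSummand R M := by
  classical
  set t := rdepth R R with ht
  set ιn : (Fin n → M) →ₗ[R] (Fin n → Fin m → R) :=
    LinearMap.pi (fun i => ι.comp (LinearMap.proj i)) with hιn
  have hιn_apply : ∀ (w : Fin n → M) (i : Fin n), ιn w i = ι (w i) := fun w i => rfl
  have hιninj : Function.Injective ιn := by
    intro x y hxy
    funext i
    exact hι (congrFun hxy i)
  set j : R →ₗ[R] (Fin n → Fin m → R) := ιn.comp h with hj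
  have hjinj : Function.Injective j := fun a b hab => hh (hιninj hab)
  set v : Fin n → Fin m → R := j 1 with hv
  by_cases hunit : ∃ (i : Fin n) (i' : Fin m), v i i' ∉ maximalIdeal R
  · -- extract a free summand
    obtain ⟨i, i', hvu⟩ := hunit
    have hu : IsUnit (v i i') := by
      by_contra hu
      exact hvu ((IsLocalRing.mem_maximalIdeal _).mpr hu)
    set e : M := h 1 i with he
    have hqe : ι e i' = v i i' := rfl
    set q : M →ₗ[R] R := (LinearMap.proj i').comp ι with hq
    have hqe' : q e = v i i' := rfl
    refine ⟨((hu.unit⁻¹ : Rˣ) : R) • q, LinearMap.toSpanSingleton R M e, ?_⟩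
    apply LinearMap.ext_ring
    show ((hu.unit⁻¹ : Rˣ) : R) • q ((1 : R) • e) = 1
    rw [one_smul]
    show ((hu.unit⁻¹ : Rˣ) : R) * q e = 1
    exact Units.inv_mul_of_eq (by rw [IsUnit.unit_spec hu, hqe'])
  · -- derive a contradiction
    exfalso
    push_neg at hunit
    haveI : Nontrivial (Fin n → Fin m → R) := by
      refine ⟨v, 0, fun h0 => ?_⟩
      have : (1 : R) = 0 := hjinj (by rw [← hv, h0, map_zero])
      exact one_ne_zero this
    have hv𝔪 : v ∈ (maximalIdeal R) • (⊤ : Submodule R (Fin n → Fin m → R)) := by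
      apply mem_ideal_smul_top_pi
      intro i
      apply mem_ideal_smul_top_pi
      intro i'
      exact mem_ideal_smul_top_self (hunit i i')
    have hjr : ∀ r : R, j r = r • v := by
      intro r
      rw [hv, ← map_smul, smul_eq_mul, mul_one]
    haveI hQnt : Nontrivial ((Fin n → Fin m → R) ⧸ LinearMap.range j) := by
      by_contra hQs
      haveI := not_nontrivial_iff_subsingleton.mp hQs
      have htop : LinearMap.range j = ⊤ :=
        Submodule.Quotient.subsingleton_iff.mp inferInstance
      have hle : (⊤ : Submodule R (Fin n → Fin m → R)) ≤
          (maximalIdeal R) • ⊤ := by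
        intro w _
        obtain ⟨r, rfl⟩ : w ∈ LinearMap.range j := htop ▸ Submodule.mem_top
        rw [hjr r]
        exact Submodule.smul_mem _ r hv𝔪
      have h3 := Submodule.eq_bot_of_le_smul_of_le_jacobson_bot (maximalIdeal R) ⊤
        (Module.Finite.fg_top) hle
        (by rw [IsLocalRing.jacobson_eq_maximalIdeal ⊥ bot_ne_top])
      obtain ⟨x, hx⟩ := exists_ne (0 : Fin n → Fin m → R)
      exact hx ((Submodule.mem_bot R).mp (h3 ▸ Submodule.mem_top))
    -- identify the cokernel of j and bound its depth
    set Q := (Fin n → Fin m → R) ⧸ LinearMap.range j with hQdef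
    have hrange_le : LinearMap.range j ≤ LinearMap.range ιn := by
      rintro w ⟨r, rfl⟩
      exact ⟨h r, rfl⟩
    set W : Submodule R Q := (LinearMap.range ιn).map (LinearMap.range j).mkQ with hW
    -- W is isomorphic to the cokernel of h
    have hψle : LinearMap.range h ≤ Submodule.comap ιn (LinearMap.range j) := by
      rintro w ⟨r, rfl⟩
      exact ⟨r, rfl⟩
    set ψ : ((Fin n → M) ⧸ LinearMap.range h) →ₗ[R] Q :=
      Submodule.mapQ (LinearMap.range h) (LinearMap.range j) ιn hψle with hψ
    have hψmk : ∀ w : Fin n → M, ψ (Submodule.Quotient.mk w) =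
        Submodule.Quotient.mk (ιn w) := fun w => rfl
    have hψinj : Function.Injective ψ := by
      rw [← LinearMap.ker_eq_bot, eq_bot_iff]
      intro wb hwb
      obtain ⟨w, rfl⟩ := Submodule.Quotient.mk_surjective _ wb
      rw [LinearMap.mem_ker, hψmk, Submodule.Quotient.mk_eq_zero] at hwb
      obtain ⟨r, hr⟩ := hwb
      have : ιn (h r) = ιn w := hr
      rw [Submodule.mem_bot, Submodule.Quotient.mk_eq_zero]
      exact ⟨r, hιninj this⟩
    have hψrange : LinearMap.range ψ = W := by
      apply le_antisymm
      · rintro wb ⟨xb, rfl⟩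
        obtain ⟨x, rfl⟩ := Submodule.Quotient.mk_surjective _ xb
        exact ⟨ιn x, ⟨x, rfl⟩, (hψmk x).symm⟩
      · rintro wb ⟨w, ⟨x, rfl⟩, rfl⟩
        exact ⟨Submodule.Quotient.mk x, hψmk x⟩
    have eW : ((Fin n → M) ⧸ LinearMap.range h) ≃ₗ[R] ↥W :=
      (LinearEquiv.ofInjective ψ hψinj) ≪≫ₗ (LinearEquiv.ofEq _ _ hψrange)
    -- Q / W is the n-th power of the cokernel of ι
    have hrange_pi : LinearMap.range ιn =
        Submodule.pi Set.univ (fun _ : Fin n => LinearMap.range ι) := by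
      ext w
      rw [Submodule.mem_pi]
      constructor
      · rintro ⟨x, rfl⟩ i _
        exact ⟨x i, rfl⟩
      · intro hw
        have hch : ∀ i : Fin n, ∃ x : M, ι x = w i := fun i => hw i trivial
        choose x hx using hch
        exact ⟨x, funext fun i => hx i⟩
    have eY : ((Fin n → Fin m → R) ⧸ LinearMap.range ιn) ≃ₗ[R]
        (Fin n → ((Fin m → R) ⧸ LinearMap.range ι)) :=
      (Submodule.quotEquivOfEq _ _ hrange_pi) ≪≫ₗ (Submodule.quotientPi _)
    have eQW : (Q ⧸ W) ≃ₗ[R] ((Fin n → Fin m → R) ⧸ LinearMap.range ιn) :=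
      Submodule.quotientQuotientEquivQuotient (LinearMap.range j)
        (LinearMap.range ιn) hrange_le
    -- depth of Q
    have htQ : t ≤ rdepth R Q := by
      apply rdepth_middle W
      · rcases hC with hC | hC
        · left
          exact eW.toEquiv.symm.subsingleton
        · right
          rw [← rdepth_congr eW]
          exact hC
      · have hdisj := rdepth_pi_disj (R := R) n
          (A := (Fin m → R) ⧸ LinearMap.range ι) (n := t) (Or.inr hY)
        have hcongr : rdepth R (Q ⧸ W) =
            rdepth R (Fin n → ((Fin m → R) ⧸ LinearMap.range ι)) :=
          rdepth_congr (eQW ≪≫ₗ eY)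
        rcases hdisj with hd | hd
        · left
          exact (eQW ≪≫ₗ eY).toEquiv.subsingleton
        · right
          rw [hcongr]
          exact hd
    -- simultaneous weakly regular sequence on R and Q of length t
    obtain ⟨rs, hlen, hmem, hwR, hwQ⟩ := exists_weakly_pair t R Q
      (Or.inr le_rfl) (Or.inr htQ)
    have hgR : GoodSeq R R rs := goodSeq_of_weakly hmem hwR
    have hsoc := socNZ_of_goodSeq_maxlen hgR hlen
    obtain ⟨zb, hzb, hzb0⟩ := hsoc
    obtain ⟨z, rfl⟩ := Submodule.Quotient.mk_surjective _ zb
    have hznot : z ∉ (Ideal.ofList rs • ⊤ : Submodule R R) := fun hmem' =>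
      hzb ((Submodule.Quotient.mk_eq_zero _).mpr hmem')
    have hzmul : ∀ r ∈ maximalIdeal R, r • z ∈ (Ideal.ofList rs • ⊤ : Submodule R R) := by
      intro r hr
      rw [← Submodule.Quotient.mk_eq_zero (p := (Ideal.ofList rs • ⊤ : Submodule R R)),
        Submodule.Quotient.mk_smul]
      exact hzb0 r hr
    -- j z has all coordinates in (rs) ⊆ R
    have hjz : j z ∈ (Ideal.ofList rs • ⊤ : Submodule R (Fin n → Fin m → R)) := by
      rw [hjr z]
      apply mem_ideal_smul_top_pi
      intro i
      apply mem_ideal_smul_top_pi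
      intro i'
      have : (z • v) i i' = v i i' • z := by
        show z • v i i' = v i i' • z
        rw [smul_eq_mul, smul_eq_mul, mul_comm]
      rw [this]
      exact hzmul (v i i') (hunit i i')
    have := inj_mod rs R (Fin n → Fin m → R) j hjinj hwQ z hjz
    exact hznot this

end SectK
section SectL
open Pointwise RingTheory.Sequence
variable {R : Type u} [CommRing R] [IsLocalRing R] [IsNoetherianRing R]

def piMap {A B : Type u} [AddCommGroup A] [Module R A] [AddCommGroup B] [Module R B]
    (k : ℕ) (φ : A →ₗ[R] B) : (Fin k → A) →ₗ[R] (Fin k → B) :=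
  LinearMap.pi (fun i => φ.comp (LinearMap.proj i))

lemma piMap_inj {A B : Type u} [AddCommGroup A] [Module R A] [AddCommGroup B]
    [Module R B] (k : ℕ) {φ : A →ₗ[R] B} (hφ : Function.Injective φ) :
    Function.Injective (piMap k φ) := by
  intro x y hxy
  funext i
  exact hφ (congrFun hxy i)

lemma piMap_surj {A B : Type u} [AddCommGroup A] [Module R A] [AddCommGroup B]
    [Module R B] (k : ℕ) {φ : A →ₗ[R] B} (hφ : Function.Surjective φ) :
    Function.Surjective (piMap k φ) := by
  intro y
  choose x hx using fun i => hφ (y i)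
  exact ⟨x, funext hx⟩

lemma range_piMap {A B : Type u} [AddCommGroup A] [Module R A] [AddCommGroup B]
    [Module R B] (k : ℕ) (φ : A →ₗ[R] B) :
    LinearMap.range (piMap k φ) =
      Submodule.pi Set.univ (fun _ : Fin k => LinearMap.range φ) := by
  ext w
  rw [Submodule.mem_pi]
  constructor
  · rintro ⟨x, rfl⟩ i _
    exact ⟨x i, rfl⟩
  · intro hw
    choose x hx using fun i => hw i trivial
    exact ⟨x, funext hx⟩

noncomputable def quotPiMapEquiv {A B : Type u} [AddCommGroup A] [Module R A]
    [AddCommGroup B] [Module R B] (k : ℕ) (φ : A →ₗ[R] B) :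
    ((Fin k → B) ⧸ LinearMap.range (piMap k φ)) ≃ₗ[R]
      (Fin k → (B ⧸ LinearMap.range φ)) :=
  (Submodule.quotEquivOfEq _ _ (range_piMap k φ)) ≪≫ₗ (Submodule.quotientPi _)

lemma rdepth_pi_ge {A : Type u} [AddCommGroup A] [Module R A] [Module.Finite R A]
    (k : ℕ) {n : ℕ} (h : n ≤ rdepth R A) [Nontrivial (Fin k → A)] :
    n ≤ rdepth R (Fin k → A) := by
  rcases rdepth_pi_disj k (Or.inr h) with hd | hd
  · exact absurd hd (not_subsingleton _)
  · exact hd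

lemma disj_transfer {A B : Type u} [AddCommGroup A] [Module R A] [AddCommGroup B]
    [Module R B] (e : A ≃ₗ[R] B) {a b : ℕ} (hab : a ≤ b)
    (h : Subsingleton A ∨ b ≤ rdepth R A) : Subsingleton B ∨ a ≤ rdepth R B := by
  rcases h with h | h
  · left
    haveI := h
    exact e.symm.toEquiv.subsingleton
  · right
    rw [← rdepth_congr e]
    omega

theorem stmt_5' (M N : Type u) [AddCommGroup M] [Module R M] [Module.Finite R M]
    [AddCommGroup N] [Module R N] [Module.Finite R N]
    (hM : OmegaDeep R M) (hN : DF R N) :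
    ((∃ g : M →ₗ[R] N, Function.Surjective g) → HasFreeSummand R M) ∧
    ((∃ ι : N →ₗ[R] M, Function.Injective ι ∧ Deep R (M ⧸ LinearMap.range ι)) →
      HasFreeSummand R M) := by
  classical
  obtain ⟨m, ι, hιinj, hYfin, hY⟩ := hM
  obtain ⟨n, f, hfinj, hXfin, hX⟩ := hN
  haveI hNnt : Nontrivial N := by
    by_contra hs
    haveI : Subsingleton N := not_nontrivial_iff_subsingleton.mp hs
    haveI : Subsingleton (Fin n → N) := inferInstance
    exact one_ne_zero (hfinj (Subsingleton.elim (f 1) (f 0)))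
  haveI hFnNnt : Nontrivial (Fin n → N) :=
    ⟨f 1, 0, fun h0 => one_ne_zero (hfinj (by rw [h0, map_zero]))⟩
  have hdepthNn : rdepth R R ≤ rdepth R (Fin n → N) := by
    apply rdepth_middle (LinearMap.range f)
    · right
      rw [← rdepth_congr (LinearEquiv.ofInjective f hfinj)]
    · exact Or.inr hX
  constructor
  · -- part (1): surjection M ↠ N
    rintro ⟨g, hg⟩
    haveI hFnMnt : Nontrivial (Fin n → M) := by
      obtain ⟨y, hy⟩ := exists_ne (0 : Fin n → N)
      obtain ⟨x, hx⟩ := piMap_surj n hg y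
      exact ⟨x, 0, fun h0 => hy (by rw [← hx, h0, map_zero])⟩
    haveI hFFnt : Nontrivial (Fin n → Fin m → R) := by
      obtain ⟨x, y, hxy⟩ := hFnMnt
      exact ⟨piMap n ι x, piMap n ι y, fun hc => hxy (piMap_inj n hιinj hc)⟩
    haveI hFmnt : Nontrivial (Fin m → R) := by
      by_contra hs
      haveI : Subsingleton (Fin m → R) := not_nontrivial_iff_subsingleton.mp hs
      haveI : Subsingleton (Fin n → Fin m → R) := inferInstance
      exact not_subsingleton (Fin n → Fin m → R) inferInstance
    set gn := piMap n g with hgn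
    obtain ⟨w, hw⟩ := piMap_surj n hg (f 1)
    set h : R →ₗ[R] (Fin n → M) := LinearMap.toSpanSingleton R _ w with hhdef
    have hcomp : ∀ r : R, gn (h r) = f r := by
      intro r
      show gn (r • w) = f r
      rw [map_smul, hw, ← map_smul, smul_eq_mul, mul_one]
    have hhinj : Function.Injective h := by
      intro a b hab
      apply hfinj
      rw [← hcomp a, ← hcomp b]
      show gn (h a) = gn (h b)
      rw [hab]
    -- depth of M^n via the embedding into the free module
    have hdepthMn : rdepth R R ≤ rdepth R (Fin n → M) := by
      have hfree : rdepth R R ≤ rdepth R (Fin n → Fin m → R) :=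
        rdepth_pi_ge n (rdepth_pi_ge m le_rfl)
      have hnt : Nontrivial (↥(LinearMap.range (piMap n ι))) :=
        (LinearEquiv.ofInjective (piMap n ι) (piMap_inj n hιinj)).symm.toEquiv.nontrivial
      have hsub := rdepth_sub (rdepth R R) (Fin n → Fin m → R)
        (LinearMap.range (piMap n ι)) hnt hfree
        (disj_transfer (quotPiMapEquiv n ι).symm (Nat.sub_le _ 1)
          (rdepth_pi_disj n (Or.inr hY)))
      rwa [rdepth_congr (LinearEquiv.ofInjective (piMap n ι) (piMap_inj n hιinj))]
    -- depth of the cokernel of h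
    have hC : Subsingleton ((Fin n → M) ⧸ LinearMap.range h) ∨
        rdepth R R ≤ rdepth R ((Fin n → M) ⧸ LinearMap.range h) := by
      by_cases hCs : Subsingleton ((Fin n → M) ⧸ LinearMap.range h)
      · exact Or.inl hCs
      right
      haveI : Nontrivial ((Fin n → M) ⧸ LinearMap.range h) :=
        not_subsingleton_iff_nontrivial.mp hCs
      -- the image of ker gn inside the cokernel of h
      set K' : Submodule R ((Fin n → M) ⧸ LinearMap.range h) :=
        (LinearMap.ker gn).map (LinearMap.range h).mkQ with hK'
      set φ : ↥(LinearMap.ker gn) →ₗ[R] ((Fin n → M) ⧸ LinearMap.range h) :=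
        (LinearMap.range h).mkQ.comp (LinearMap.ker gn).subtype with hφ
      have hφinj : Function.Injective φ := by
        rw [← LinearMap.ker_eq_bot, eq_bot_iff]
        rintro ⟨x, hx⟩ hker
        have hx' : x ∈ LinearMap.range h := by
          have : Submodule.Quotient.mk x = (0 : (Fin n → M) ⧸ LinearMap.range h) := hker
          rwa [Submodule.Quotient.mk_eq_zero] at this
        obtain ⟨r, rfl⟩ := hx'
        have hr0 : f r = 0 := by rw [← hcomp r]; exact hx
        have hre : r = 0 := hfinj (by rw [hr0, map_zero])
        have hzero : h r = 0 := by rw [hre, map_zero]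
        rw [Submodule.mem_bot]
        exact Subtype.ext hzero
      have hφrange : LinearMap.range φ = K' := by
        rw [hφ, LinearMap.range_comp, Submodule.range_subtype]
      have eK : ↥(LinearMap.ker gn) ≃ₗ[R] ↥K' :=
        (LinearEquiv.ofInjective φ hφinj) ≪≫ₗ (LinearEquiv.ofEq _ _ hφrange)
      -- the induced surjection onto X with kernel K'
      have hle : LinearMap.range h ≤ Submodule.comap gn (LinearMap.range f) := by
        rintro x ⟨r, rfl⟩
        rw [Submodule.mem_comap, hcomp r]
        exact ⟨r, rfl⟩
      set gbar := Submodule.mapQ (LinearMap.range h) (LinearMap.range f) gn hle with hgb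
      have hgbmk : ∀ x : Fin n → M, gbar (Submodule.Quotient.mk x) =
          Submodule.Quotient.mk (gn x) := fun x => rfl
      have hgbsurj : Function.Surjective gbar := by
        intro yb
        obtain ⟨y, rfl⟩ := Submodule.Quotient.mk_surjective _ yb
        obtain ⟨x, rfl⟩ := piMap_surj n hg y
        exact ⟨Submodule.Quotient.mk x, hgbmk x⟩
      have hkerbar : LinearMap.ker gbar = K' := by
        apply le_antisymm
        · intro xb hxb
          obtain ⟨x, rfl⟩ := Submodule.Quotient.mk_surjective _ xb
          have hxb' : Submodule.Quotient.mk (gn x) =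
              (0 : (Fin n → N) ⧸ LinearMap.range f) := hxb
          rw [Submodule.Quotient.mk_eq_zero] at hxb'
          obtain ⟨r, hr⟩ := hxb'
          have hmem : x - h r ∈ LinearMap.ker gn := by
            have hcalc : gn (x - h r) = 0 := by rw [map_sub, hcomp r, hr, sub_self]
            exact hcalc
          have hmk : (LinearMap.range h).mkQ (x - h r) = Submodule.Quotient.mk x := by
            rw [Submodule.mkQ_apply, Submodule.Quotient.mk_sub]
            have h0 : (Submodule.Quotient.mk (h r) :
                (Fin n → M) ⧸ LinearMap.range h) = 0 :=
              (Submodule.Quotient.mk_eq_zero _).mpr ⟨r, rfl⟩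
            rw [h0, sub_zero]
          exact hmk ▸ Submodule.mem_map_of_mem hmem
        · rintro xb ⟨x, hx, rfl⟩
          have hx0 : gn x = 0 := hx
          have hfin : gbar (Submodule.Quotient.mk x) = 0 := by
            rw [hgbmk, hx0]
            exact (Submodule.Quotient.mk_eq_zero _).mpr (zero_mem _)
          exact hfin
      have eX : (((Fin n → M) ⧸ LinearMap.range h) ⧸ K') ≃ₗ[R]
          ((Fin n → N) ⧸ LinearMap.range f) :=
        (Submodule.quotEquivOfEq K' (LinearMap.ker gbar) hkerbar.symm) ≪≫ₗ
          gbar.quotKerEquivRange ≪≫ₗ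
          (LinearEquiv.ofEq _ _ (LinearMap.range_eq_top.mpr hgbsurj)) ≪≫ₗ
          Submodule.topEquiv
      -- apply the middle depth lemma
      apply rdepth_middle K'
      · by_cases hks : Subsingleton (↥(LinearMap.ker gn))
        · left
          haveI := hks
          exact eK.symm.toEquiv.subsingleton
        · right
          haveI hknt : Nontrivial (↥(LinearMap.ker gn)) :=
            not_subsingleton_iff_nontrivial.mp hks
          have eker : ((Fin n → M) ⧸ LinearMap.ker gn) ≃ₗ[R] (Fin n → N) :=
            gn.quotKerEquivRange ≪≫ₗ
              (LinearEquiv.ofEq _ _ (LinearMap.range_eq_top.mpr (piMap_surj n hg))) ≪≫ₗ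
              Submodule.topEquiv
          have hsub := rdepth_sub (rdepth R R) (Fin n → M) (LinearMap.ker gn) hknt
            hdepthMn (by
              right
              rw [rdepth_congr eker]
              omega)
          rwa [rdepth_congr eK] at hsub
      · exact disj_transfer eX.symm le_rfl (Or.inr hX)
    exact main_endgame ι hιinj hY h hhinj hC
  · -- part (2): embedding N ↪ M with deep cokernel
    rintro ⟨ι', hι'inj, hDfin, hD⟩
    set h₂ : R →ₗ[R] (Fin n → M) := (piMap n ι').comp f with hh₂
    have hinj₂ : Function.Injective h₂ := fun a b hab =>
      hfinj (piMap_inj n hι'inj hab)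
    have hC : Subsingleton ((Fin n → M) ⧸ LinearMap.range h₂) ∨
        rdepth R R ≤ rdepth R ((Fin n → M) ⧸ LinearMap.range h₂) := by
      by_cases hCs : Subsingleton ((Fin n → M) ⧸ LinearMap.range h₂)
      · exact Or.inl hCs
      right
      haveI : Nontrivial ((Fin n → M) ⧸ LinearMap.range h₂) :=
        not_subsingleton_iff_nontrivial.mp hCs
      set W₂ : Submodule R ((Fin n → M) ⧸ LinearMap.range h₂) :=
        (LinearMap.range (piMap n ι')).map (LinearMap.range h₂).mkQ with hW₂
      have hle₂ : LinearMap.range f ≤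
          Submodule.comap (piMap n ι') (LinearMap.range h₂) := by
        rintro x ⟨r, rfl⟩
        exact ⟨r, rfl⟩
      set ψ₂ := Submodule.mapQ (LinearMap.range f) (LinearMap.range h₂)
        (piMap n ι') hle₂ with hψ₂
      have hψ₂mk : ∀ x : Fin n → N, ψ₂ (Submodule.Quotient.mk x) =
          Submodule.Quotient.mk (piMap n ι' x) := fun x => rfl
      have hψ₂inj : Function.Injective ψ₂ := by
        rw [← LinearMap.ker_eq_bot, eq_bot_iff]
        intro xb hxb
        obtain ⟨x, rfl⟩ := Submodule.Quotient.mk_surjective _ xb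
        rw [LinearMap.mem_ker, hψ₂mk, Submodule.Quotient.mk_eq_zero] at hxb
        obtain ⟨r, hr⟩ := hxb
        have : piMap n ι' (f r) = piMap n ι' x := hr
        rw [Submodule.mem_bot, Submodule.Quotient.mk_eq_zero]
        exact ⟨r, piMap_inj n hι'inj this⟩
      have hψ₂range : LinearMap.range ψ₂ = W₂ := by
        apply le_antisymm
        · rintro wb ⟨xb, rfl⟩
          obtain ⟨x, rfl⟩ := Submodule.Quotient.mk_surjective _ xb
          exact ⟨piMap n ι' x, ⟨x, rfl⟩, (hψ₂mk x).symm⟩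
        · rintro wb ⟨v, ⟨x, rfl⟩, rfl⟩
          exact ⟨Submodule.Quotient.mk x, hψ₂mk x⟩
      have eW₂ : ((Fin n → N) ⧸ LinearMap.range f) ≃ₗ[R] ↥W₂ :=
        (LinearEquiv.ofInjective ψ₂ hψ₂inj) ≪≫ₗ (LinearEquiv.ofEq _ _ hψ₂range)
      have hle₂' : LinearMap.range h₂ ≤ LinearMap.range (piMap n ι') := by
        rintro x ⟨r, rfl⟩
        exact ⟨f r, rfl⟩
      have eQW₂ : ((((Fin n → M) ⧸ LinearMap.range h₂)) ⧸ W₂) ≃ₗ[R]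
          (Fin n → (M ⧸ LinearMap.range ι')) :=
        (Submodule.quotientQuotientEquivQuotient (LinearMap.range h₂)
          (LinearMap.range (piMap n ι')) hle₂') ≪≫ₗ quotPiMapEquiv n ι'
      apply rdepth_middle W₂
      · exact disj_transfer eW₂ le_rfl (Or.inr hX)
      · exact disj_transfer eQW₂.symm le_rfl (rdepth_pi_disj n (Or.inr hD))
    exact main_endgame ι hιinj hY h₂ hinj₂ hC

end SectL
/-- Suppose `M ∈ ΩDeep(R)` and `N ∈ DF(R)`.
(1) If there is a surjection `M ↠ N`, then `M` has a free direct summand.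
(2) If there is a short exact sequence `0 → N → M → X → 0` with `X ∈ Deep(R)`
(equivalently, an injection `ι : N ↪ M` whose cokernel lies in `Deep(R)`),
then `M` has a free direct summand. -/
theorem stmt_5 (R : Type u) [CommRing R] [IsNoetherianRing R] [IsLocalRing R]
    (M N : Type u) [AddCommGroup M] [Module R M] [Module.Finite R M]
    [AddCommGroup N] [Module R N] [Module.Finite R N]
    (hM : OmegaDeep R M) (hN : DF R N) :
    ((∃ g : M →ₗ[R] N, Function.Surjective g) → HasFreeSummand R M) ∧
    ((∃ ι : N →ₗ[R] M, Function.Injective ι ∧ Deep R (M ⧸ LinearMap.range ι)) →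
      HasFreeSummand R M) :=
  stmt_5' M N hM hN
end

section
/- Suppose R is a Cohen-Macaulay local ring of Krull dimension d ≤ 1, and M is a nonzero finitely generated maximal Cohen-Macaulay R-module. If M* = Hom_R(M, R) is a free R-module, then M is a free R-module. -/
universe u

open IsLocalRing

/-- Socle elements exist below any ideal contained in the nilradical. -/
lemma nilsoc {A : Type*} [CommRing A] [IsNoetherianRing A] [Nontrivial A]
    (J : Ideal A) (hJ : J ≤ nilradical A) :
    ∃ α : A, α ≠ 0 ∧ ∀ r ∈ J, r * α = 0 := by
  classical
  obtain ⟨n, hn⟩ := IsNoetherianRing.isNilpotent_nilradical A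
  have hex : ∃ k, nilradical A ^ k = ⊥ := ⟨n, hn⟩
  have hkspec : nilradical A ^ (Nat.find hex) = ⊥ := Nat.find_spec hex
  rcases Nat.eq_zero_or_pos (Nat.find hex) with h0 | hpos
  · rw [h0, pow_zero, Ideal.one_eq_top] at hkspec
    exact absurd (hkspec ▸ Submodule.mem_top : (1 : A) ∈ (⊥ : Ideal A)) (by simp)
  · have hlt : nilradical A ^ (Nat.find hex - 1) ≠ ⊥ := Nat.find_min hex (by omega)
    obtain ⟨α, hmem, hne⟩ := Submodule.exists_mem_ne_zero_of_ne_bot hlt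
    refine ⟨α, hne, fun r hr => ?_⟩
    have h2 : r * α ∈ nilradical A ^ (Nat.find hex) := by
      have h3 : Nat.find hex = (Nat.find hex - 1) + 1 := by omega
      rw [h3, pow_succ']
      exact Ideal.mul_mem_mul (hJ hr) hmem
    rw [hkspec] at h2
    simpa using h2


/-- Over a Noetherian local ring, a nonzero finite module admits a nonzero map to any module
containing a nonzero element killed by the maximal ideal. -/
lemma soc_functional {A : Type*} [CommRing A] [IsNoetherianRing A] [IsLocalRing A]
    (C : Type*) [AddCommGroup C] [Module A C] [Module.Finite A C] [Nontrivial C]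
    (T : Type*) [AddCommGroup T] [Module A T]
    (α : T) (hα : α ≠ 0) (hsoc : ∀ r ∈ maximalIdeal A, r • α = 0) :
    ∃ g : C →ₗ[A] T, g ≠ 0 := by
  classical
  haveI : IsNoetherian A C := isNoetherian_of_isNoetherianRing_of_finite A C
  obtain ⟨N, hN, hmax⟩ :=
    set_has_maximal_iff_noetherian.mpr ‹IsNoetherian A C›
      {N : Submodule A C | N ≠ ⊤} ⟨⊥, bot_ne_top⟩
  haveI : Nontrivial (C ⧸ N) :=
    Submodule.Quotient.nontrivial_iff.mpr hN
  haveI : Module.Finite A (C ⧸ N) := Module.Finite.of_surjective N.mkQ N.mkQ_surjective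
  obtain ⟨v, hv⟩ := exists_ne (0 : C ⧸ N)
  -- the maximal ideal kills the quotient
  have hJbot : (maximalIdeal A) • (⊤ : Submodule A (C ⧸ N)) = ⊥ := by
    set J := (maximalIdeal A) • (⊤ : Submodule A (C ⧸ N)) with hJdef
    have hJtop : J ≠ ⊤ := by
      intro h
      have h2 : (⊤ : Submodule A (C ⧸ N)) = ⊥ := by
        refine Submodule.eq_bot_of_le_smul_of_le_jacobson_bot (maximalIdeal A) ⊤
          (Module.finite_def.mp inferInstance) h.ge ?_
        rw [IsLocalRing.jacobson_eq_maximalIdeal ⊥ bot_ne_top]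
      exact absurd h2.symm bot_ne_top
    -- comap in C
    have hcomle : N ≤ J.comap N.mkQ := by
      intro x hx
      simp only [Submodule.mem_comap, Submodule.mkQ_apply]
      rw [(Submodule.Quotient.mk_eq_zero N).mpr hx]
      exact J.zero_mem
    rcases eq_or_lt_of_le hcomle with hEq | hLt
    · have : J = Submodule.map N.mkQ (J.comap N.mkQ) := by
        rw [Submodule.map_comap_eq, Submodule.range_mkQ, top_inf_eq]
      rw [this, ← hEq]
      rw [eq_bot_iff]
      rintro y ⟨x, hx, rfl⟩
      simp [(Submodule.Quotient.mk_eq_zero N).mpr hx]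
    · have : J.comap N.mkQ = ⊤ := by
        by_contra hc
        exact (hmax _ hc) hLt
      exfalso
      apply hJtop
      have : J = Submodule.map N.mkQ (J.comap N.mkQ) := by
        rw [Submodule.map_comap_eq, Submodule.range_mkQ, top_inf_eq]
      rw [this, ‹J.comap N.mkQ = ⊤›, Submodule.map_top, Submodule.range_mkQ]
  have hsmul : ∀ r ∈ maximalIdeal A, r • v = 0 := by
    intro r hr
    have : r • v ∈ (maximalIdeal A) • (⊤ : Submodule A (C ⧸ N)) :=
      Submodule.smul_mem_smul hr Submodule.mem_top
    rw [hJbot] at this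
    simpa using this
  -- the quotient is simple: span of v is everything
  have hspan : Submodule.span A {v} = ⊤ := by
    set W' := (Submodule.span A {v}).comap N.mkQ with hW'
    obtain ⟨x, hx⟩ := N.mkQ_surjective v
    have hNle : N ≤ W' := by
      intro c hc
      simp only [hW', Submodule.mem_comap, Submodule.mkQ_apply]
      rw [(Submodule.Quotient.mk_eq_zero N).mpr hc]
      exact Submodule.zero_mem _
    have hNne : N ≠ W' := by
      intro hEq
      apply hv
      have hxW : x ∈ W' := by
        simp only [hW', Submodule.mem_comap, hx]
        exact Submodule.mem_span_singleton_self v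
      rw [← hEq] at hxW
      rw [← hx]
      exact (Submodule.Quotient.mk_eq_zero N).mpr hxW
    have hW'top : W' = ⊤ := by
      by_contra hc
      exact (hmax _ hc) (lt_of_le_of_ne hNle hNne)
    rw [eq_top_iff]
    rintro q -
    obtain ⟨c, rfl⟩ := N.mkQ_surjective q
    have : c ∈ W' := hW'top ▸ Submodule.mem_top
    simpa [hW'] using this
  set φ := LinearMap.toSpanSingleton A (C ⧸ N) v with hφdef
  have hφ : Function.Surjective φ := by
    rw [← LinearMap.range_eq_top, ← LinearMap.span_singleton_eq_range, hspan]
  have hker : LinearMap.ker φ ≤ LinearMap.ker (LinearMap.toSpanSingleton A T α) := by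
    intro r hr
    rw [LinearMap.mem_ker, LinearMap.toSpanSingleton_apply] at hr ⊢
    by_cases hrm : r ∈ maximalIdeal A
    · exact hsoc r hrm
    · exfalso
      have hu : IsUnit r := by
        by_contra hnu
        exact hrm hnu
      exact hv (hu.smul_eq_zero.mp hr)
  set ψ := Submodule.liftQ (LinearMap.ker φ) (LinearMap.toSpanSingleton A T α) hker
  set eqv := φ.quotKerEquivOfSurjective hφ
  refine ⟨ψ ∘ₗ (eqv.symm : (C ⧸ N) ≃ₗ[A] _).toLinearMap ∘ₗ N.mkQ, ?_⟩
  intro h0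
  obtain ⟨x, hx⟩ := N.mkQ_surjective v
  have h1 : eqv (Submodule.Quotient.mk 1) = v := by
    show φ.quotKerEquivOfSurjective hφ (Submodule.Quotient.mk 1) = v
    rw [LinearMap.quotKerEquivOfSurjective, LinearEquiv.trans_apply, LinearEquiv.ofTop_apply,
      LinearMap.quotKerEquivRange_apply_mk]
    show φ 1 = v
    rw [hφdef, LinearMap.toSpanSingleton_apply_one]
  have h2 : eqv.symm v = Submodule.Quotient.mk 1 := by
    rw [LinearEquiv.symm_apply_eq, h1]
  have h3 : (ψ ∘ₗ (eqv.symm : (C ⧸ N) ≃ₗ[A] _).toLinearMap ∘ₗ N.mkQ) x = α := by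
    simp only [LinearMap.comp_apply, Submodule.mkQ_apply, hx, LinearEquiv.coe_coe, h2]
    rw [Submodule.liftQ_apply, LinearMap.toSpanSingleton_apply_one]
  rw [h0] at h3
  exact hα (by simpa using h3.symm)



/-- A nonzerodivisor avoids every minimal prime. -/
lemma zmin {R : Type u} [CommRing R] (p : Ideal R) [hp : p.IsPrime]
    (hmin : ∀ q : Ideal R, q.IsPrime → q ≤ p → q = p)
    {z : R} (hz : IsSMulRegular R z) : z ∉ p := by
  intro hzp
  have hnil : algebraMap R (Localization.AtPrime p) z ∈ nilradical (Localization.AtPrime p) := by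
    rw [nilradical_eq_sInf]
    refine Ideal.mem_sInf.mpr ?_
    rintro P hP
    haveI : P.IsPrime := hP
    have hcomle : P.comap (algebraMap R (Localization.AtPrime p)) ≤ p := by
      intro a ha
      by_contra hap
      exact hP.ne_top (Ideal.eq_top_of_isUnit_mem _ ha
        (IsLocalization.map_units (Localization.AtPrime p) (⟨a, hap⟩ : p.primeCompl)))
    have hq : P.comap (algebraMap R (Localization.AtPrime p)) = p :=
      hmin _ (Ideal.IsPrime.comap _) hcomle
    have hmem : z ∈ P.comap (algebraMap R (Localization.AtPrime p)) := by
      rw [hq]; exact hzp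
    exact hmem
  obtain ⟨n, hn⟩ := (mem_nilradical.mp hnil)
  have hzero : algebraMap R (Localization.AtPrime p) (z ^ n) = 0 := by
    rw [map_pow]; exact hn
  obtain ⟨s, hs⟩ := (IsLocalization.map_eq_zero_iff p.primeCompl
    (Localization.AtPrime p) _).mp hzero
  have hs0 : (s : R) = 0 := by
    apply hz.pow n
    show z ^ n • (s : R) = z ^ n • (0 : R)
    rw [smul_eq_mul, smul_eq_mul, mul_zero, mul_comm]
    exact hs
  exact s.2 (hs0 ▸ p.zero_mem)

/-- A strict chain of two primes forces Krull dimension at least 1. -/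
lemma chain1 {R : Type u} [CommRing R] {p q : Ideal R} (hp : p.IsPrime) (hq : q.IsPrime)
    (h1 : p < q) : (1 : WithBot ℕ∞) ≤ ringKrullDim R := by
  have h1' : (⟨p, hp⟩ : PrimeSpectrum R) < ⟨q, hq⟩ := h1
  let s0 : LTSeries (PrimeSpectrum R) := RelSeries.singleton _ ⟨q, hq⟩
  have hh : (⟨p, hp⟩ : PrimeSpectrum R) < s0.head := h1'
  have := Order.LTSeries.length_le_krullDim (s0.cons ⟨p, hp⟩ hh)
  have hlen : (s0.cons ⟨p, hp⟩ hh).length = 1 := rfl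
  rw [hlen] at this
  exact_mod_cast this

/-- A strict chain of three primes forces Krull dimension at least 2. -/
lemma chain2 {R : Type u} [CommRing R] {p q r : Ideal R} (hp : p.IsPrime) (hq : q.IsPrime)
    (hr : r.IsPrime) (h1 : p < q) (h2 : q < r) : (2 : WithBot ℕ∞) ≤ ringKrullDim R := by
  let s0 : LTSeries (PrimeSpectrum R) := RelSeries.singleton _ ⟨r, hr⟩
  have h2' : (⟨q, hq⟩ : PrimeSpectrum R) < s0.head := h2
  let s1 := s0.cons ⟨q, hq⟩ h2'
  have h1' : (⟨p, hp⟩ : PrimeSpectrum R) < s1.head := by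
    rw [RelSeries.head_cons]
    exact h1
  have := Order.LTSeries.length_le_krullDim (s1.cons ⟨p, hp⟩ h1')
  have hlen : (s1.cons ⟨p, hp⟩ h1').length = 2 := rfl
  rw [hlen] at this
  exact_mod_cast this





lemma reg_of_rdepth_one {R : Type u} [CommRing R] [IsLocalRing R]
    {N : Type u} [AddCommGroup N] [Module R N] (h : rdepth R N = 1) :
    ∃ y ∈ maximalIdeal R, IsSMulRegular N y := by
  have h' : sSup {n : ℕ | ∃ rs : List R, rs.length = n ∧ (∀ r ∈ rs, r ∈ maximalIdeal R) ∧
      RingTheory.Sequence.IsRegular N rs} = 1 := h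
  set S := {n : ℕ | ∃ rs : List R, rs.length = n ∧ (∀ r ∈ rs, r ∈ maximalIdeal R) ∧
      RingTheory.Sequence.IsRegular N rs} with hS
  have hne : S.Nonempty := by
    by_contra hc
    rw [Set.not_nonempty_iff_eq_empty] at hc
    rw [hc] at h'
    simp [csSup_empty] at h'
  have hbdd : BddAbove S := by
    by_contra hc
    have hinf : S.Infinite := fun hfin => hc hfin.bddAbove
    rw [Set.Infinite.Nat.sSup_eq_zero hinf] at h'
    omega
  have hmem := Nat.sSup_mem hne hbdd
  rw [h'] at hmem
  obtain ⟨rs, hlen, hmemm, hreg⟩ := hmem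
  obtain ⟨y, rfl⟩ := List.length_eq_one_iff.mp hlen
  exact ⟨y, hmemm y (by simp),
    ((RingTheory.Sequence.isRegular_cons_iff N y []).mp hreg).1⟩

lemma dual_finite {R : Type u} [CommRing R] [IsNoetherianRing R]
    (M : Type u) [AddCommGroup M] [Module R M] [Module.Finite R M] :
    Module.Finite R (Module.Dual R M) := by
  obtain ⟨n, f, hf⟩ := Module.Finite.exists_fin' R M
  haveI : IsNoetherian R (Module.Dual R (Fin n → R)) :=
    isNoetherian_of_isNoetherianRing_of_finite R _
  refine Module.Finite.of_injective f.dualMap ?_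
  intro a b hab
  apply LinearMap.ext
  intro m
  obtain ⟨x, rfl⟩ := hf m
  exact LinearMap.congr_fun hab x



set_option maxHeartbeats 1000000 in
set_option synthInstance.maxHeartbeats 400000 in
/-- If a finite module over a Noetherian local ring has vanishing dual but nontrivial
localization at a minimal prime, we get a contradiction. -/
lemma loc_contra {R : Type u} [CommRing R] [IsNoetherianRing R] [IsLocalRing R]
    (K : Type u) [AddCommGroup K] [Module R K] [Module.Finite R K]
    (p : Ideal R) [hpprime : p.IsPrime]
    (hminimal : ∀ q : Ideal R, q.IsPrime → q ≤ p → q = p)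
    (hsupp : Nontrivial (LocalizedModule p.primeCompl K))
    (hK0 : ∀ f : K →ₗ[R] R, f = 0) : False := by
  haveI : IsNoetherianRing (Localization.AtPrime p) :=
    IsLocalization.isNoetherianRing p.primeCompl _ inferInstance
  haveI : Module.Finite (Localization.AtPrime p) (LocalizedModule p.primeCompl K) :=
    Module.Finite.of_isLocalizedModule p.primeCompl
      (LocalizedModule.mkLinearMap p.primeCompl K)
  have hmnil : maximalIdeal (Localization.AtPrime p) ≤
      nilradical (Localization.AtPrime p) := by
    rw [nilradical_eq_sInf]
    refine le_sInf fun P hP => ?_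
    haveI : P.IsPrime := hP
    have hcomle : P.comap (algebraMap R (Localization.AtPrime p)) ≤ p := by
      intro a ha
      by_contra hap
      exact hP.ne_top (Ideal.eq_top_of_isUnit_mem _ ha
        (IsLocalization.map_units (Localization.AtPrime p) (⟨a, hap⟩ : p.primeCompl)))
    have hcom : P.comap (algebraMap R (Localization.AtPrime p)) = p :=
      hminimal _ (Ideal.IsPrime.comap _) hcomle
    have hPmap : P = Ideal.map (algebraMap R (Localization.AtPrime p)) p := by
      conv_lhs => rw [← IsLocalization.map_comap p.primeCompl (Localization.AtPrime p) P]
      exact congrArg (Ideal.map _) hcom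
    rw [hPmap, Localization.AtPrime.map_eq_maximalIdeal]
  obtain ⟨α, hα0, hαm⟩ := nilsoc _ hmnil
  obtain ⟨g, hg⟩ := soc_functional (LocalizedModule p.primeCompl K)
    (Localization.AtPrime p) α hα0
    (fun (r : Localization.AtPrime p) (hr : r ∈ maximalIdeal (Localization.AtPrime p)) =>
      show r • α = 0 by rw [smul_eq_mul]; exact hαm r hr)
  haveI : Module.FinitePresentation R K := Module.finitePresentation_of_finite R _
  apply hg
  have hzero : ∀ x : (LocalizedModule p.primeCompl K) →ₗ[R] (Localization.AtPrime p),
      x = 0 := by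
    intro x
    obtain ⟨⟨f0, s⟩, hf0⟩ := IsLocalizedModule.mk'_surjective p.primeCompl
      (IsLocalizedModule.map p.primeCompl
        (LocalizedModule.mkLinearMap p.primeCompl K)
        (Algebra.linearMap R (Localization.AtPrime p))) x
    rw [← hf0]
    show IsLocalizedModule.mk' _ f0 s = 0
    rw [hK0 f0, IsLocalizedModule.mk'_zero]
  apply LinearMap.ext
  intro w
  have h14 := LinearMap.congr_fun (hzero (g.restrictScalars R)) w
  simpa using h14


set_option maxHeartbeats 1000000 in
set_option synthInstance.maxHeartbeats 400000 in
/-- Suppose `R` is a Cohen-Macaulay local ring of Krull dimension `≤ 1`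
and `M` is a nonzero finitely generated maximal Cohen-Macaulay module.
If `M* = Hom_R(M,R)` is free, then `M` is free. -/
theorem stmt_12 (R : Type u) [CommRing R] [IsNoetherianRing R] [IsLocalRing R]
    (hCM : ((rdepth R R : ℕ∞) : WithBot ℕ∞) = ringKrullDim R)
    (hdim : ringKrullDim R ≤ 1)
    (M : Type u) [AddCommGroup M] [Module R M] [Module.Finite R M] [Nontrivial M]
    (hMCM : ((rdepth R M : ℕ∞) : WithBot ℕ∞) = ringKrullDim R)
    (hdual : Module.Free R (M →ₗ[R] R)) :
    Module.Free R M := by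
  classical
  haveI hMdualFin : Module.Finite R (Module.Dual R M) := dual_finite M
  haveI hMdualFree : Module.Free R (Module.Dual R M) := hdual
  set F := Module.Dual R (Module.Dual R M) with hFdef
  set e : M →ₗ[R] F := Module.Dual.eval R M with hedef
  -- the transpose of the evaluation map is bijective
  have hcomp : ∀ f : Module.Dual R M,
      e.dualMap (Module.Dual.eval R (Module.Dual R M) f) = f := by
    intro f
    apply LinearMap.ext
    intro m
    rfl
  have hbij : Function.Bijective ⇑e.dualMap := by
    have hEq : ⇑e.dualMap = ⇑(Module.evalEquiv R (Module.Dual R M)).symm := by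
      funext g
      calc e.dualMap g
          = e.dualMap (Module.evalEquiv R (Module.Dual R M)
              ((Module.evalEquiv R (Module.Dual R M)).symm g)) := by
            rw [LinearEquiv.apply_symm_apply]
        _ = (Module.evalEquiv R (Module.Dual R M)).symm g := by
            rw [Module.evalEquiv_apply]
            exact hcomp _
    rw [hEq]
    exact (Module.evalEquiv R (Module.Dual R M)).symm.bijective
  -- functionals on the cokernel of e vanish
  have hA : ∀ g : (F ⧸ LinearMap.range e) →ₗ[R] R, g = 0 := by
    intro g
    have h2 : g ∘ₗ (LinearMap.range e).mkQ = 0 := by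
      apply hbij.injective
      rw [map_zero]
      apply LinearMap.ext
      intro m
      show (g ∘ₗ (LinearMap.range e).mkQ) (e m) = 0
      rw [LinearMap.comp_apply, Submodule.mkQ_apply,
        (Submodule.Quotient.mk_eq_zero _).mpr (LinearMap.mem_range_self e m), map_zero]
    apply LinearMap.ext
    intro x
    obtain ⟨y, rfl⟩ := Submodule.Quotient.mk_surjective _ x
    exact LinearMap.congr_fun h2 y
  -- the dimension dichotomy
  have h01 : rdepth R R = 0 ∨ rdepth R R = 1 := by
    have h := hdim
    rw [← hCM, show (1 : WithBot ℕ∞) = (((1 : ℕ) : ℕ∞) : WithBot ℕ∞) by norm_cast] at h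
    have h2 : (rdepth R R : ℕ∞) ≤ ((1 : ℕ) : ℕ∞) := WithBot.coe_le_coe.mp h
    have h3 : rdepth R R ≤ 1 := by exact_mod_cast h2
    omega
  have hcases : (maximalIdeal R ≤ nilradical R) ∨
      ((∃ z ∈ maximalIdeal R, IsSMulRegular R z) ∧
       (∃ y ∈ maximalIdeal R, IsSMulRegular M y)) := by
    rcases h01 with h0 | h1
    · left
      have hdim0 : ringKrullDim R = 0 := by
        rw [← hCM, h0]
        norm_cast
      rw [nilradical_eq_sInf]
      refine le_sInf fun P hP => ?_
      haveI : P.IsPrime := hP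
      rcases eq_or_lt_of_le (IsLocalRing.le_maximalIdeal hP.ne_top) with hPm | hPm
      · exact le_of_eq hPm.symm
      · exfalso
        have := chain1 hP (maximalIdeal.isMaximal R).isPrime hPm
        rw [hdim0] at this
        exact absurd this (by decide)
    · right
      have hM1 : rdepth R M = 1 := by
        have heq : ((rdepth R M : ℕ∞) : WithBot ℕ∞) = ((rdepth R R : ℕ∞) : WithBot ℕ∞) := by
          rw [hMCM, hCM]
        have h2 : (rdepth R M : ℕ∞) = (rdepth R R : ℕ∞) := WithBot.coe_inj.mp heq
        have h3 : rdepth R M = rdepth R R := by exact_mod_cast h2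
        rw [h3, h1]
      exact ⟨reg_of_rdepth_one h1, reg_of_rdepth_one hM1⟩
  -- STEP 1 : e is surjective
  have hrange : LinearMap.range e = ⊤ := by
    by_contra hne
    haveI hCnt : Nontrivial (F ⧸ LinearMap.range e) :=
      Submodule.Quotient.nontrivial_iff.mpr hne
    haveI hCfin : Module.Finite R (F ⧸ LinearMap.range e) :=
      Module.Finite.of_surjective (LinearMap.range e).mkQ (LinearMap.range e).mkQ_surjective
    rcases hcases with hm | ⟨⟨z, hzm, hzreg⟩, -⟩
    · -- depth 0 case
      obtain ⟨α, hα0, hαm⟩ := nilsoc (maximalIdeal R) hm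
      obtain ⟨g, hg⟩ := soc_functional (F ⧸ LinearMap.range e) R α hα0
        (fun (r : R) (hr : r ∈ maximalIdeal R) =>
          show r • α = 0 by rw [smul_eq_mul]; exact hαm r hr)
      exact hg (hA g)
    · -- depth 1 case
      set I : Ideal R := Ideal.span {z} with hIdef
      have hItop : I ≠ ⊤ := by
        rw [hIdef, Ne, Ideal.span_singleton_eq_top]
        exact mem_nonunits_iff.mp ((mem_maximalIdeal z).mp hzm)
      haveI hTnt : Nontrivial (R ⧸ I) := Ideal.Quotient.nontrivial_iff.mpr hItop
      have hpr : ∀ q : Ideal R, q.IsPrime → z ∈ q → q = maximalIdeal R := by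
        intro q hq hzq
        by_contra hne'
        have hqm : q < maximalIdeal R :=
          lt_of_le_of_ne (IsLocalRing.le_maximalIdeal hq.ne_top) hne'
        obtain ⟨p, hpmin, hpq⟩ := Ideal.exists_minimalPrimes_le (bot_le : (⊥ : Ideal R) ≤ q)
        have hpprime : p.IsPrime := hpmin.1.1
        haveI := hpprime
        have hminimal : ∀ q' : Ideal R, q'.IsPrime → q' ≤ p → q' = p :=
          fun q' hq' hle => le_antisymm hle (hpmin.2 ⟨hq', bot_le⟩ hle)
        have hznp : z ∉ p := zmin p hminimal hzreg
        have hpq' : p < q := lt_of_le_of_ne hpq (fun h => hznp (h ▸ hzq))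
        have hcontra := le_trans
          (chain2 hpprime hq (maximalIdeal.isMaximal R).isPrime hpq' hqm) hdim
        exact absurd hcontra (by decide)
      have hprA : ∀ P : Ideal (R ⧸ I), P.IsPrime →
          P = Ideal.map (Ideal.Quotient.mk I) (maximalIdeal R) := by
        intro P hP
        haveI := hP
        have hzc : z ∈ P.comap (Ideal.Quotient.mk I) := by
          show Ideal.Quotient.mk I z ∈ P
          rw [Ideal.Quotient.eq_zero_iff_mem.mpr (Ideal.subset_span (Set.mem_singleton z))]
          exact P.zero_mem
        have hcom : P.comap (Ideal.Quotient.mk I) = maximalIdeal R :=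
          hpr _ (Ideal.IsPrime.comap _) hzc
        conv_lhs => rw [← Ideal.map_comap_of_surjective _ Ideal.Quotient.mk_surjective P]
        rw [hcom]
      have hmA : Ideal.map (Ideal.Quotient.mk I) (maximalIdeal R) ≤ nilradical (R ⧸ I) := by
        rw [nilradical_eq_sInf]
        exact le_sInf fun P hP => le_of_eq (hprA P hP).symm
      obtain ⟨α, hα0, hαm⟩ := nilsoc _ hmA
      obtain ⟨g, hg⟩ := soc_functional (F ⧸ LinearMap.range e) (R ⧸ I) α hα0
        (fun r hr => by
          obtain ⟨a, rfl⟩ := Ideal.Quotient.mk_surjective α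
          have h5 := hαm (Ideal.Quotient.mk I r) (Ideal.mem_map_of_mem _ hr)
          rw [← map_mul] at h5
          have h6 : r • Ideal.Quotient.mk I a = Ideal.Quotient.mk I (r * a) := by
            rw [← Ideal.Quotient.mk_eq_mk, ← Ideal.Quotient.mk_eq_mk,
              ← Submodule.Quotient.mk_smul, smul_eq_mul]
          rw [h6]
          exact h5)
      -- now show that g must vanish, a contradiction
      apply hg
      set π := (LinearMap.range e).mkQ with hπdef
      obtain ⟨H, hH⟩ := Module.projective_lifting_property I.mkQ (g ∘ₗ π) I.mkQ_surjective
      have hmem : ∀ m : M, H (e m) ∈ I := by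
        intro m
        have h7 : I.mkQ (H (e m)) = 0 := by
          rw [← LinearMap.comp_apply, hH, LinearMap.comp_apply, hπdef, Submodule.mkQ_apply,
            (Submodule.Quotient.mk_eq_zero _).mpr (LinearMap.mem_range_self e m), map_zero]
        rwa [Submodule.mkQ_apply, Submodule.Quotient.mk_eq_zero] at h7
      set μ : R →ₗ[R] R := LinearMap.toSpanSingleton R R z with hμdef
      have hμapp : ∀ a : R, μ a = z * a := by
        intro a
        rw [hμdef, LinearMap.toSpanSingleton_apply, smul_eq_mul, mul_comm]
      have hμinj : Function.Injective ⇑μ := by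
        intro a b hab
        apply hzreg
        show z • a = z • b
        rw [smul_eq_mul, smul_eq_mul, ← hμapp, ← hμapp, hab]
      have hrangeμ : ∀ m : M, H (e m) ∈ LinearMap.range μ := by
        intro m
        have : (Submodule.span R {z} : Submodule R R) = LinearMap.range μ := by
          rw [hμdef]
          exact LinearMap.span_singleton_eq_range R R z
        rw [← this]
        exact hmem m
      set Eμ := LinearEquiv.ofInjective μ hμinj with hEμdef
      set G' : M →ₗ[R] R :=
        Eμ.symm.toLinearMap ∘ₗ LinearMap.codRestrict (LinearMap.range μ) (H ∘ₗ e)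
          (fun m => hrangeμ m) with hG'def
      have hkey : ∀ w : LinearMap.range μ, μ (Eμ.symm w) = (w : R) := by
        intro w
        rw [hEμdef, ← LinearEquiv.ofInjective_apply μ (h := hμinj), LinearEquiv.apply_symm_apply]
      have hG' : ∀ m : M, z * G' m = H (e m) := by
        intro m
        have h8 : μ (G' m) = H (e m) := by
          rw [hG'def]
          have := hkey (LinearMap.codRestrict (LinearMap.range μ) (H ∘ₗ e)
            (fun m => hrangeμ m) m)
          rw [LinearMap.codRestrict_apply] at this
          simpa using this
        rw [← hμapp]
        exact h8
      obtain ⟨Φ, hΦ⟩ := hbij.surjective G'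
      have hker : LinearMap.range e ≤ LinearMap.ker (H - z • Φ) := by
        rintro x ⟨m, rfl⟩
        rw [LinearMap.mem_ker, LinearMap.sub_apply, LinearMap.smul_apply]
        have h9 : Φ (e m) = G' m := by rw [← hΦ]; rfl
        rw [h9, smul_eq_mul, hG' m, sub_self]
      have hφ0 := hA (Submodule.liftQ (LinearMap.range e) (H - z • Φ) hker)
      have hHz : H = z • Φ := by
        have h10 := Submodule.liftQ_mkQ (LinearMap.range e) (H - z • Φ) hker
        rw [hφ0] at h10
        have h11 : H - z • Φ = 0 := by
          rw [← h10]
          apply LinearMap.ext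
          intro w
          rfl
        rw [← sub_eq_zero]
        exact h11
      apply LinearMap.ext
      intro x
      obtain ⟨f, rfl⟩ := Submodule.Quotient.mk_surjective _ x
      have h12 : g (π f) = I.mkQ (H f) := (LinearMap.congr_fun hH f).symm
      have h13 : π f = Submodule.Quotient.mk f := rfl
      rw [LinearMap.zero_apply, ← h13, h12, hHz]
      rw [LinearMap.smul_apply, Submodule.mkQ_apply, Submodule.Quotient.mk_eq_zero, smul_eq_mul]
      exact Ideal.mul_mem_right _ _ (Ideal.subset_span (Set.mem_singleton z))
  -- STEP 2 : e is injective, and conclude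
  have hesurj : Function.Surjective ⇑e := LinearMap.range_eq_top.mp hrange
  obtain ⟨σ, hσ⟩ := Module.projective_lifting_property e LinearMap.id hesurj
  have hprmem : ∀ x : M, x - σ (e x) ∈ LinearMap.ker e := by
    intro x
    rw [LinearMap.mem_ker, map_sub]
    have h1 : e (σ (e x)) = e x := LinearMap.congr_fun hσ (e x)
    rw [h1, sub_self]
  set pr : M →ₗ[R] LinearMap.ker e :=
    LinearMap.codRestrict (LinearMap.ker e) (LinearMap.id - σ ∘ₗ e)
      (fun x => hprmem x) with hprdef
  have hprK : ∀ x : LinearMap.ker e, pr (x : M) = x := by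
    intro x
    apply Subtype.ext
    show (x : M) - σ (e (x : M)) = (x : M)
    rw [LinearMap.mem_ker.mp x.2, map_zero, sub_zero]
  haveI : Module.Finite R (LinearMap.ker e) :=
    Module.Finite.of_surjective pr (fun x => ⟨(x : M), hprK x⟩)
  have hK0 : ∀ f : (LinearMap.ker e) →ₗ[R] R, f = 0 := by
    intro f
    apply LinearMap.ext
    intro x
    have hx0 : e (x : M) = 0 := LinearMap.mem_ker.mp x.2
    have h3 : (f ∘ₗ pr) (x : M) = 0 := by
      have h4 : (f ∘ₗ pr) (x : M) = (e (x : M)) (f ∘ₗ pr) := rfl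
      rw [h4, hx0]
      rfl
    rw [LinearMap.comp_apply, hprK x] at h3
    rw [h3]
    rfl
  have hKbot : LinearMap.ker e = ⊥ := by
    by_contra hKne
    haveI : Nontrivial (LinearMap.ker e) := Submodule.nontrivial_iff_ne_bot.mpr hKne
    rcases hcases with hm | ⟨-, ⟨y, hym, hyreg⟩⟩
    · -- depth 0 case
      obtain ⟨α, hα0, hαm⟩ := nilsoc (maximalIdeal R) hm
      obtain ⟨g, hg⟩ := soc_functional (LinearMap.ker e) R α hα0
        (fun (r : R) (hr : r ∈ maximalIdeal R) =>
          show r • α = 0 by rw [smul_eq_mul]; exact hαm r hr)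
      exact hg (hK0 g)
    · -- depth 1 case
      obtain ⟨p, hp⟩ := associatedPrimes.nonempty R (LinearMap.ker e)
      obtain ⟨hpprime, u, hu⟩ := isAssociatedPrime_iff.mp hp
      rw [Submodule.bot_colon'] at hu
      haveI := hpprime
      have hu0 : u ≠ 0 := by
        rintro rfl
        apply hpprime.ne_top
        rw [hu, Submodule.span_singleton_eq_bot.mpr rfl, Submodule.annihilator_bot]
      by_cases hpm : p = maximalIdeal R
      · -- then u is a socle element of M, contradicting regularity of y
        have hymem : y ∈ (R ∙ u).annihilator := by
          rw [← hu, hpm]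
          exact hym
        have hyu : y • u = 0 := (Submodule.mem_annihilator_span_singleton u y).mp hymem
        have hyu' : y • (u : M) = 0 := by
          have hco : ((y • u : LinearMap.ker e) : M) = y • (u : M) := rfl
          rw [← hco, hyu]
          rfl
        have hucoe : (u : M) = 0 :=
          hyreg (show y • (u : M) = y • (0 : M) by rw [hyu', smul_zero])
        exact hu0 (by apply Subtype.ext; rw [hucoe]; rfl)
      · -- p is a minimal prime; localize at p
        have hpltm : p < maximalIdeal R :=
          lt_of_le_of_ne (IsLocalRing.le_maximalIdeal hpprime.ne_top) hpm
        have hminimal : ∀ q : Ideal R, q.IsPrime → q ≤ p → q = p := by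
          intro q hq hle
          by_contra hne'
          have h1 : q < p := lt_of_le_of_ne hle hne'
          have h2 := le_trans
            (chain2 hq hpprime (maximalIdeal.isMaximal R).isPrime h1 hpltm) hdim
          exact absurd h2 (by decide)
        have hsup : (⟨p, hpprime⟩ : PrimeSpectrum R) ∈ Module.support R (LinearMap.ker e) :=
          Module.mem_support_iff_exists_annihilator.mpr ⟨u, le_of_eq hu.symm⟩
        exact loc_contra (LinearMap.ker e) p hminimal (Module.mem_support_iff.mp hsup) hK0
  have hinj : Function.Injective ⇑e := by
    rw [← LinearMap.ker_eq_bot]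
    exact hKbot
  exact Module.Free.of_equiv (LinearEquiv.ofBijective e ⟨hinj, hesurj⟩).symm
end
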